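/- arXiv:2510.13693 — 4 statements merged into one kernel-verified Lean document; each statement's English description precedes it below -/
import Mathlib

section
/- There exists h : ℕ → ℝ with h ∈ 𝔸 ∩ 𝒔 and ‖h‖_𝔹 = ∞; in particular, 𝔸 ∩ 𝒔 is not contained in 𝔹. -/
open Filter ENNReal
open scoped Classical

noncomputable section

/-- Coordinate projection onto a finite set of indices. -/
def proj (A : Finset ℕ) (f : ℕ → ℝ) : ℕ → ℝ := fun n => if n ∈ A then f n else 0

/-- Coordinate projection onto a set of indices. -/
def projSet (A : Set ℕ) (f : ℕ → ℝ) : ℕ → ℝ := fun n => if n ∈ A then f n else 0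

/-- `𝟙*_A(f) = ∑_{n ∈ A} f n`. -/
def oneStar (f : ℕ → ℝ) (A : Finset ℕ) : ℝ := ∑ n ∈ A, f n

/-- `A` is a greedy set of `f`. -/
def GreedySet (f : ℕ → ℝ) (A : Finset ℕ) : Prop :=
  ∀ n ∈ A, ∀ k, k ∉ A → |f k| ≤ |f n|

/-- `β(f,A) = sup_{I ∈ ℐ} |𝟙*_{I∖A}(f)| ∈ [0,∞]`, the sup running over all finite
integer intervals `I = [a,b]`. -/
def beta (f : ℕ → ℝ) (A : Finset ℕ) : ℝ≥0∞ :=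
  ⨆ a : ℕ, ⨆ b : ℕ, ENNReal.ofReal |oneStar f (Finset.Icc a b \ A)|

/-- `‖f‖_𝔹 = sup_{A ∈ 𝒢(f)} β(f,A) ∈ [0,∞]`. -/
def BNorm (f : ℕ → ℝ) : ℝ≥0∞ :=
  ⨆ A ∈ {A : Finset ℕ | GreedySet f A}, beta f A

/-- Membership in `𝔹`, i.e. `‖f‖_𝔹 < ∞`. -/
def MemB (f : ℕ → ℝ) : Prop := BNorm f < ⊤

/-- Membership in `c₀`. -/
def Memc0 (f : ℕ → ℝ) : Prop := Tendsto f atTop (nhds 0)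

/-- Membership in `𝔹₀`. -/
def MemB0 (f : ℕ → ℝ) : Prop :=
  Memc0 f ∧ ∀ ε : ℝ, 0 < ε → ∃ A : Finset ℕ, GreedySet f A ∧
    ∀ B : Finset ℕ, GreedySet f B → A ⊆ B → beta f B < ENNReal.ofReal ε

/-- The net `(𝟙*_A(f))_{A ∈ 𝒢(f)}`, directed by inclusion, converges to `s`. -/
def GreedyLim (f : ℕ → ℝ) (s : ℝ) : Prop :=
  ∀ ε : ℝ, 0 < ε → ∃ A : Finset ℕ, GreedySet f A ∧
    ∀ B : Finset ℕ, GreedySet f B → A ⊆ B → |oneStar f B - s| < ε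

/-- Membership in `𝔸`. -/
def MemA (f : ℕ → ℝ) : Prop := Memc0 f ∧ ∃ s, GreedyLim f s

/-- `σ_g(f)`, the greedy sum of `f` (junk value `0` if the greedy net does not converge). -/
def sigmaG (f : ℕ → ℝ) : ℝ := if h : ∃ s, GreedyLim f s then h.choose else 0

/-- `‖f‖_𝔸 = sup_{A ∈ 𝒢(f)} |σ_g(f) - 𝟙*_A(f)|`. -/
def ANorm (f : ℕ → ℝ) : ℝ≥0∞ :=
  ⨆ A ∈ {A : Finset ℕ | GreedySet f A}, ENNReal.ofReal |sigmaG f - oneStar f A|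

/-- The series `∑_n f n` converges (in the ordered sense) to `s`. -/
def SeriesLim (f : ℕ → ℝ) (s : ℝ) : Prop :=
  Tendsto (fun m => ∑ n ∈ Finset.range m, f n) atTop (nhds s)

/-- Membership in `𝒔`: the series `∑_n f n` converges. -/
def MemSeries (f : ℕ → ℝ) : Prop := ∃ s, SeriesLim f s

/-- `σ_s(f) = ∑_{n=0}^∞ f n` (junk value `0` if the series does not converge). -/
def sigmaS (f : ℕ → ℝ) : ℝ := if h : ∃ s, SeriesLim f s then h.choose else 0

/-- `‖f‖_𝒔 = sup_m |∑_{n = m}^∞ f n|`, expressed via `σ_s(f)` minus partial sums. -/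
def sNorm (f : ℕ → ℝ) : ℝ≥0∞ :=
  ⨆ m : ℕ, ENNReal.ofReal |sigmaS f - ∑ n ∈ Finset.range m, f n|

/-- `D(f)(m)`: the `m`-th term (for `m ≥ 1`) of the nonincreasing rearrangement of `|f|`,
as an element of `[0,∞]`. -/
def Drearr (f : ℕ → ℝ) (m : ℕ) : ℝ≥0∞ :=
  sInf {t : ℝ≥0∞ | {n : ℕ | t < ENNReal.ofReal |f n|}.Finite ∧
    {n : ℕ | t < ENNReal.ofReal |f n|}.ncard < m}

/-- `ρ_{1,∞}(f,k) = sup_{m ≥ 1} m · D(f)(m+k) ∈ [0,∞]`. Note `ρ_{1,∞}(f,0) = ‖f‖_{1,∞}`. -/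
def rho (f : ℕ → ℝ) (k : ℕ) : ℝ≥0∞ :=
  ⨆ m : ℕ, ⨆ _ : 1 ≤ m, (m : ℝ≥0∞) * Drearr f (m + k)

/-- Membership in `h_{1,∞}`: `lim_m m · D(f)(m) = 0`. -/
def Memh1inf (f : ℕ → ℝ) : Prop :=
  Tendsto (fun m : ℕ => (m : ℝ≥0∞) * Drearr f m) atTop (nhds 0)

/-- A sequence of nonempty finite integer intervals which is right-dominant:
`max J_k < min J_{k+1}` for all `k`. -/
def RightDominant (J : ℕ → Finset ℕ) : Prop :=
  (∀ k : ℕ, ∃ a b : ℕ, a ≤ b ∧ J k = Finset.Icc a b) ∧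
  ∀ k : ℕ, ∀ n ∈ J k, ∀ m ∈ J (k + 1), n < m

/-- `g` is Leibnizian with admissible sequence `J`. -/
def Admissible (g : ℕ → ℝ) (J : ℕ → Finset ℕ) : Prop :=
  RightDominant J ∧
  (∀ n : ℕ, g n ≠ 0 → ∃ k, n ∈ J k) ∧
  (∀ k : ℕ, oneStar g (J (k + 1)) ≤ oneStar g (J k)) ∧
  (∀ k : ℕ, ∀ n ∈ J k, g n ≠ 0 → ∀ m ∈ J (k + 1), g m < g n)

end
namespace Stmt13


/-- Block size parameter: `N_k = 16^k`. -/
def Nk (k : ℕ) : ℕ := 16 ^ k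

lemma Nk_pos (k : ℕ) : 0 < Nk k := Nat.pow_pos (by norm_num)

/-- Basic unit for block `k`. -/
noncomputable def uk (k : ℕ) : ℝ := ((4 * Nk k * Nk k * 4 ^ k : ℕ) : ℝ)⁻¹

lemma uk_pos (k : ℕ) : 0 < uk k := by
  have : (0:ℕ) < 4 * Nk k * Nk k * 4 ^ k := by unfold Nk; positivity
  exact inv_pos.2 (by exact_mod_cast this)

/-- `a_k = 4 N_k² u_k`, the base magnitude of block `k`. -/
noncomputable def akr (k : ℕ) : ℝ := ((4 * Nk k * Nk k : ℕ) : ℝ) * uk k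

lemma akr_eq (k : ℕ) : akr k = ((4:ℝ) ^ k)⁻¹ := by
  have h1 : ((4 * Nk k * Nk k : ℕ) : ℝ) ≠ 0 := by
    have : (0:ℕ) < 4 * Nk k * Nk k := by unfold Nk; positivity
    exact_mod_cast this.ne'
  have h2 : ((4:ℝ) ^ k) ≠ 0 := by positivity
  rw [akr, uk]
  push_cast
  push_cast at h1
  field_simp
  exact div_self (by exact_mod_cast (Nk_pos k).ne')

lemma akr_pos (k : ℕ) : 0 < akr k := by rw [akr_eq]; positivity

lemma akr_anti {k j : ℕ} (h : k ≤ j) : akr j ≤ akr k := by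
  rw [akr_eq, akr_eq]
  exact inv_anti₀ (by positivity) (pow_le_pow_right₀ (by norm_num) h)

lemma two_akr_succ (k : ℕ) : 2 * akr (k + 1) < akr k := by
  rw [akr_eq, akr_eq, pow_succ]
  rw [mul_inv]
  have : (0:ℝ) < ((4:ℝ)^k)⁻¹ := by positivity
  nlinarith

/-- Magnitude index: for reduced offset `r < 2N`, `ck k r` gives the level index. -/
def ck (k r : ℕ) : ℕ := if r % 2 = 0 then 2 * Nk k - 1 - r / 2 else Nk k - 1 - r / 2

lemma ck_lt (k r : ℕ) : ck k r < 2 * Nk k := by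
  have := Nk_pos k
  unfold ck; split <;> omega

/-- The value of `h` at offset `r` of block `k`. -/
noncomputable def hblk (k r : ℕ) : ℝ :=
  if 1 ≤ k ∧ r < 4 * Nk k then
    (if ((r < 2 * Nk k) ↔ (r % 2 = 0)) then 1 else -1)
      * ((4 * Nk k * Nk k + ck k (r % (2 * Nk k)) : ℕ) : ℝ) * uk k
  else 0

lemma hblk_zero_of (k r : ℕ) (h : ¬ (1 ≤ k ∧ r < 4 * Nk k)) : hblk k r = 0 := by
  rw [hblk, if_neg h]

lemma hblk_abs {k r : ℕ} (hk : 1 ≤ k) (hr : r < 4 * Nk k) :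
    |hblk k r| = ((4 * Nk k * Nk k + ck k (r % (2 * Nk k)) : ℕ) : ℝ) * uk k := by
  rw [hblk, if_pos ⟨hk, hr⟩]
  rw [abs_mul, abs_mul]
  have h1 : (0:ℝ) ≤ ((4 * Nk k * Nk k + ck k (r % (2 * Nk k)) : ℕ) : ℝ) := by positivity
  rw [abs_of_nonneg h1, abs_of_nonneg (uk_pos k).le]
  split <;> norm_num

lemma hblk_abs_lower {k r : ℕ} (hk : 1 ≤ k) (hr : r < 4 * Nk k) :
    akr k ≤ |hblk k r| := by
  rw [hblk_abs hk hr, akr]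
  have := uk_pos k
  have : ((4 * Nk k * Nk k : ℕ) : ℝ) ≤ ((4 * Nk k * Nk k + ck k (r % (2 * Nk k)) : ℕ) : ℝ) := by
    exact_mod_cast Nat.le_add_right _ _
  nlinarith [uk_pos k]

lemma hblk_abs_upper (k r : ℕ) : |hblk k r| ≤ 2 * akr k := by
  by_cases h : 1 ≤ k ∧ r < 4 * Nk k
  · rw [hblk_abs h.1 h.2, akr]
    have hc : ck k (r % (2 * Nk k)) < 2 * Nk k := ck_lt _ _
    have hN : 1 ≤ Nk k := Nk_pos k
    have : (4 * Nk k * Nk k + ck k (r % (2 * Nk k))) ≤ 2 * (4 * Nk k * Nk k) := by nlinarith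
    have h2 : ((4 * Nk k * Nk k + ck k (r % (2 * Nk k)) : ℕ) : ℝ)
        ≤ 2 * ((4 * Nk k * Nk k : ℕ) : ℝ) := by exact_mod_cast this
    nlinarith [uk_pos k]
  · rw [hblk_zero_of k r h]
    simp
    nlinarith [akr_pos k]

lemma hblk_ne_zero {k r : ℕ} (hk : 1 ≤ k) (hr : r < 4 * Nk k) : hblk k r ≠ 0 := by
  have h := hblk_abs_lower hk hr
  have := akr_pos k
  intro h0
  rw [h0] at h
  simp at h
  linarith

/-- Second half of a block is the negation of the first half. -/
lemma hblk_flip {k r : ℕ} (hk : 1 ≤ k) (hr : r < 2 * Nk k) :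
    hblk k (r + 2 * Nk k) = - hblk k r := by
  have hN := Nk_pos k
  have h1 : r + 2 * Nk k < 4 * Nk k := by omega
  have h2 : r < 4 * Nk k := by omega
  simp only [hblk]
  rw [if_pos (⟨hk, h1⟩ : 1 ≤ k ∧ r + 2 * Nk k < 4 * Nk k),
      if_pos (⟨hk, h2⟩ : 1 ≤ k ∧ r < 4 * Nk k)]
  have e1 : (r + 2 * Nk k) % (2 * Nk k) = r % (2 * Nk k) := by
    simp [Nat.add_mod_right]
  have e2 : r % (2 * Nk k) = r := Nat.mod_eq_of_lt hr
  rw [e1, e2]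
  have e3 : (r + 2 * Nk k) % 2 = r % 2 := by omega
  have e4 : ¬ (r + 2 * Nk k < 2 * Nk k) := by omega
  by_cases hp : r % 2 = 0
  · have i1 : ((r < 2 * Nk k) ↔ (r % 2 = 0)) := iff_of_true hr hp
    have i2 : ¬ ((r + 2 * Nk k < 2 * Nk k) ↔ ((r + 2 * Nk k) % 2 = 0)) := by
      rw [e3]
      intro hiff
      exact e4 (hiff.2 hp)
    rw [if_pos i1, if_neg i2]
    ring
  · have i1 : ¬ ((r < 2 * Nk k) ↔ (r % 2 = 0)) := fun hiff => hp (hiff.1 hr)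
    have i2 : ((r + 2 * Nk k < 2 * Nk k) ↔ ((r + 2 * Nk k) % 2 = 0)) :=
      iff_of_false e4 (by omega)
    rw [if_neg i1, if_pos i2]
    ring



/-- The sequence `h` itself. -/
noncomputable def hh (n : ℕ) : ℝ := hblk (Nat.log 32 n) (n - 32 ^ Nat.log 32 n)

lemma log_block {k r : ℕ} (hk : 1 ≤ k) (hr : r < 4 * Nk k) :
    Nat.log 32 (32 ^ k + r) = k := by
  apply Nat.log_eq_of_pow_le_of_lt_pow (Nat.le_add_right _ _)
  have h16 : (16:ℕ) ^ k ≤ 32 ^ k := Nat.pow_le_pow_left (by norm_num) k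
  have : (0:ℕ) < 32 ^ k := by positivity
  unfold Nk at hr
  calc 32 ^ k + r < 32 ^ k + 4 * 32 ^ k := by omega
    _ ≤ 32 ^ (k + 1) := by rw [pow_succ]; omega

lemma hh_at {k r : ℕ} (hk : 1 ≤ k) (hr : r < 4 * Nk k) :
    hh (32 ^ k + r) = hblk k r := by
  rw [hh, log_block hk hr, Nat.add_sub_cancel_left]

/-- Decomposition into block coordinates. -/
lemma hh_coord {n : ℕ} (h : hh n ≠ 0) :
    1 ≤ Nat.log 32 n ∧ 32 ^ Nat.log 32 n ≤ n ∧
      n - 32 ^ Nat.log 32 n < 4 * Nk (Nat.log 32 n) ∧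
      n = 32 ^ Nat.log 32 n + (n - 32 ^ Nat.log 32 n) := by
  rw [hh] at h
  by_contra hc
  rcases Classical.em (1 ≤ Nat.log 32 n ∧ n - 32 ^ Nat.log 32 n < 4 * Nk (Nat.log 32 n)) with hg | hg
  · -- then the missing part is 32^log ≤ n
    have hn : n ≠ 0 := by
      intro h0; subst h0; have := hg.1; simp at this
    have : 32 ^ Nat.log 32 n ≤ n := Nat.pow_log_le_self 32 hn
    exact hc ⟨hg.1, this, hg.2, by omega⟩
  · exact h (hblk_zero_of _ _ (by tauto))


lemma hblk_k0 (r : ℕ) : hblk 0 r = 0 := hblk_zero_of _ _ (by omega)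

/-- Partial sums within a block. -/
noncomputable def Sblk (k t : ℕ) : ℝ := ∑ r ∈ Finset.range t, hblk k r

lemma Sblk_k0 (t : ℕ) : Sblk 0 t = 0 := by
  simp [Sblk, hblk_k0]

lemma hblk_even {k i : ℕ} (hk : 1 ≤ k) (hi : i < Nk k) :
    hblk k (2 * i) = ((4 * Nk k * Nk k + (2 * Nk k - 1 - i) : ℕ) : ℝ) * uk k := by
  have hN := Nk_pos k
  rw [hblk, if_pos (⟨hk, by omega⟩ : 1 ≤ k ∧ 2 * i < 4 * Nk k)]
  have e2 : (2 * i) % (2 * Nk k) = 2 * i := Nat.mod_eq_of_lt (by omega)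
  have e3 : ck k (2 * i) = 2 * Nk k - 1 - i := by
    unfold ck; rw [if_pos (by omega)]; omega
  rw [e2, e3, if_pos (iff_of_true (by omega) (by omega))]
  ring

lemma hblk_odd {k i : ℕ} (hk : 1 ≤ k) (hi : i < Nk k) :
    hblk k (2 * i + 1) = -(((4 * Nk k * Nk k + (Nk k - 1 - i) : ℕ) : ℝ) * uk k) := by
  have hN := Nk_pos k
  rw [hblk, if_pos (⟨hk, by omega⟩ : 1 ≤ k ∧ 2 * i + 1 < 4 * Nk k)]
  have e2 : (2 * i + 1) % (2 * Nk k) = 2 * i + 1 := Nat.mod_eq_of_lt (by omega)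
  have e3 : ck k (2 * i + 1) = Nk k - 1 - i := by
    unfold ck; rw [if_neg (by omega)]; omega
  have e4 : ¬ ((2 * i + 1 < 2 * Nk k) ↔ ((2 * i + 1) % 2 = 0)) := by
    intro hiff
    have h5 := hiff.1 (by omega)
    omega
  rw [e2, e3, if_neg e4]
  ring

lemma pair_sum {k i : ℕ} (hk : 1 ≤ k) (hi : i < Nk k) :
    hblk k (2 * i) + hblk k (2 * i + 1) = ((Nk k : ℕ) : ℝ) * uk k := by
  rw [hblk_even hk hi, hblk_odd hk hi]
  have hN := Nk_pos k
  have e : (4 * Nk k * Nk k + (2 * Nk k - 1 - i)) = (4 * Nk k * Nk k + (Nk k - 1 - i)) + Nk k := by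
    omega
  rw [e]
  push_cast
  ring

lemma Sblk_succ (k t : ℕ) : Sblk k (t + 1) = Sblk k t + hblk k t := by
  rw [Sblk, Finset.sum_range_succ]; rfl

lemma Sblk_even_eq {k : ℕ} (hk : 1 ≤ k) :
    ∀ i ≤ Nk k, Sblk k (2 * i) = ((i * Nk k : ℕ) : ℝ) * uk k := by
  intro i
  induction i with
  | zero => intro _; simp [Sblk]
  | succ i ih =>
    intro hi
    have e : 2 * (i + 1) = (2 * i + 1) + 1 := by ring
    rw [e, Sblk_succ, Sblk_succ, ih (by omega)]
    rw [show (2:ℕ) * i + 1 = 2 * i + 1 from rfl]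
    have hp := pair_sum hk (show i < Nk k by omega)
    push_cast
    push_cast at hp
    linarith

lemma Sblk_flip {k : ℕ} (hk : 1 ≤ k) :
    ∀ j ≤ 2 * Nk k, Sblk k (2 * Nk k + j) = Sblk k (2 * Nk k) - Sblk k j := by
  intro j
  induction j with
  | zero => intro _; simp [Sblk]
  | succ j ih =>
    intro hj
    have e : 2 * Nk k + (j + 1) = (2 * Nk k + j) + 1 := by ring
    rw [e, Sblk_succ, ih (by omega), Sblk_succ]
    have : hblk k (2 * Nk k + j) = - hblk k j := by
      rw [show 2 * Nk k + j = j + 2 * Nk k by ring]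
      exact hblk_flip hk (by omega)
    rw [this]
    ring

lemma Sblk_total {k : ℕ} : Sblk k (4 * Nk k) = 0 := by
  rcases Nat.eq_zero_or_pos k with rfl | hk
  · exact Sblk_k0 _
  · have := Sblk_flip hk (2 * Nk k) le_rfl
    rw [show 2 * Nk k + 2 * Nk k = 4 * Nk k by ring] at this
    rw [this]; ring

lemma Sblk_stable {k t : ℕ} (ht : 4 * Nk k ≤ t) : Sblk k t = 0 := by
  induction t with
  | zero => simp [Sblk]
  | succ t ih =>
    rcases Nat.lt_or_ge t (4 * Nk k) with h | h
    · have : t + 1 = 4 * Nk k := by omega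
      rw [this]; exact Sblk_total
    · rw [Sblk_succ, ih h, hblk_zero_of _ _ (by omega)]; ring

/-- Global bound on block partial sums. -/
lemma Sblk_abs (k t : ℕ) : |Sblk k t| ≤ 3 * akr k := by
  have hA := akr_pos k
  rcases Nat.eq_zero_or_pos k with rfl | hk
  · rw [Sblk_k0]; simpa using by linarith
  have hN := Nk_pos k
  have hNu : ((Nk k * Nk k : ℕ) : ℝ) * uk k = akr k / 4 := by
    rw [akr]; push_cast; ring
  have hfirst : ∀ t ≤ 2 * Nk k, |Sblk k t| ≤ (9/4) * akr k := by
    intro t ht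
    rcases Nat.even_or_odd t with ⟨i, hi⟩ | ⟨i, hi⟩
    · have hi' : i ≤ Nk k := by omega
      rw [hi, show i + i = 2 * i by ring, Sblk_even_eq hk i hi']
      have h1 : (0:ℝ) ≤ ((i * Nk k : ℕ) : ℝ) * uk k :=
        mul_nonneg (Nat.cast_nonneg _) (uk_pos k).le
      rw [abs_of_nonneg h1]
      have h2 : ((i * Nk k : ℕ) : ℝ) ≤ ((Nk k * Nk k : ℕ) : ℝ) := by
        exact_mod_cast Nat.mul_le_mul_right _ hi'
      have h6 : ((i * Nk k : ℕ) : ℝ) * uk k ≤ akr k / 4 := by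
        rw [← hNu]; exact mul_le_mul_of_nonneg_right h2 (uk_pos k).le
      linarith
    · have hi' : i < Nk k := by omega
      rw [hi, Sblk_succ, Sblk_even_eq hk i hi'.le]
      have h2 : ((i * Nk k : ℕ) : ℝ) ≤ ((Nk k * Nk k : ℕ) : ℝ) := by
        exact_mod_cast Nat.mul_le_mul_right _ hi'.le
      have h3 := hblk_abs_upper k (2 * i)
      have h4 : (0:ℝ) ≤ ((i * Nk k : ℕ) : ℝ) * uk k :=
        mul_nonneg (Nat.cast_nonneg _) (uk_pos k).le
      have h5 := abs_add_le (((i * Nk k : ℕ) : ℝ) * uk k) (hblk k (2 * i))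
      rw [abs_of_nonneg h4] at h5
      have h6 : ((i * Nk k : ℕ) : ℝ) * uk k ≤ akr k / 4 := by
        rw [← hNu]; exact mul_le_mul_of_nonneg_right h2 (uk_pos k).le
      linarith
  rcases Nat.lt_or_ge t (2 * Nk k + 1) with h | h
  · have := hfirst t (by omega)
    linarith
  rcases Nat.lt_or_ge t (4 * Nk k) with h2 | h2
  · have e : t = 2 * Nk k + (t - 2 * Nk k) := by omega
    rw [e, Sblk_flip hk _ (by omega)]
    have b1 : |Sblk k (2 * Nk k)| ≤ akr k / 4 := by
      rw [Sblk_even_eq hk (Nk k) le_rfl,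
        abs_of_nonneg (mul_nonneg (Nat.cast_nonneg _) (uk_pos k).le), ← hNu]
    have b2 := hfirst (t - 2 * Nk k) (by omega)
    calc |Sblk k (2 * Nk k) - Sblk k (t - 2 * Nk k)|
        ≤ |Sblk k (2 * Nk k)| + |Sblk k (t - 2 * Nk k)| := abs_sub _ _
      _ ≤ 3 * akr k := by linarith
  · rw [Sblk_stable h2]; simpa using by linarith

/-- Partial sums of `hh`. -/
noncomputable def SS (m : ℕ) : ℝ := ∑ n ∈ Finset.range m, hh n

lemma SS_eq (m : ℕ) : SS m = Sblk (Nat.log 32 m) (m - 32 ^ Nat.log 32 m) := by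
  induction m with
  | zero => simp [SS, Sblk, Nat.log]
  | succ m ih =>
    have hstep : SS (m + 1) = SS m + hh m := by
      rw [SS, Finset.sum_range_succ]; rfl
    rcases Nat.lt_or_ge (m + 1) 32 with hlt | hge
    · have l1 : Nat.log 32 (m + 1) = 0 := Nat.log_of_lt hlt
      have l0 : Nat.log 32 m = 0 := Nat.log_of_lt (by omega)
      rw [hstep, ih, l1, l0, Sblk_k0, Sblk_k0, hh, l0, hblk_k0]
      ring
    · set k' := Nat.log 32 (m + 1) with hk'def
      have hk' : 1 ≤ k' := by
        have := (Nat.le_log_iff_pow_le (by norm_num) (by omega)).2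
          (show (32:ℕ) ^ 1 ≤ m + 1 by simpa using hge)
        simpa using this
      have hup : m + 1 < 32 ^ (k' + 1) := Nat.lt_pow_succ_log_self (by norm_num) _
      have hlow : 32 ^ k' ≤ m + 1 := Nat.pow_log_le_self 32 (by omega)
      rcases Nat.lt_or_ge m (32 ^ k') with hm | hm
      · -- m + 1 = 32 ^ k'
        have heq : m + 1 = 32 ^ k' := by omega
        set j := k' - 1 with hjdef
        have hjk : j + 1 = k' := by omega
        have h32 : (32:ℕ) ^ k' = 32 * 32 ^ j := by rw [← hjk, pow_succ]; ring
        have hpos : 0 < (32:ℕ) ^ j := Nat.pow_pos (by norm_num)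
        rw [h32] at heq
        have hj1 : 32 ^ j ≤ m := by omega
        have hj2 : m < 32 ^ (j + 1) := by omega
        have hlogm : Nat.log 32 m = j := Nat.log_eq_of_pow_le_of_lt_pow hj1 hj2
        have hr : 4 * Nk j ≤ m - 32 ^ j := by
          have h16 : (16:ℕ) ^ j ≤ 32 ^ j := Nat.pow_le_pow_left (by norm_num) j
          unfold Nk
          omega
        have hhm : hh m = 0 := by
          rw [hh, hlogm]
          exact hblk_zero_of _ _ (by omega)
        rw [hstep, ih, hlogm, hhm, Sblk_stable hr, show m + 1 = 32 ^ k' by omega]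
        simp [Sblk]
      · -- same block
        have hlogm : Nat.log 32 m = k' := Nat.log_eq_of_pow_le_of_lt_pow hm (by omega)
        have e : m + 1 - 32 ^ k' = (m - 32 ^ k') + 1 := by omega
        rw [hstep, ih, hlogm, e, Sblk_succ, hh, hlogm]

lemma log32_tendsto : Tendsto (fun m => Nat.log 32 m) atTop atTop := by
  apply tendsto_atTop_atTop.2
  intro K
  refine ⟨32 ^ K, fun m hm => ?_⟩
  have h1 : (0:ℕ) < 32 ^ K := by positivity
  exact (Nat.le_log_iff_pow_le (by norm_num) (by omega)).2 hm

lemma aux_tendsto : Tendsto (fun m : ℕ => ((4:ℝ) ^ (Nat.log 32 m))⁻¹) atTop (nhds 0) := by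
  have h1 : Tendsto (fun n : ℕ => ((4:ℝ)⁻¹) ^ n) atTop (nhds 0) :=
    tendsto_pow_atTop_nhds_zero_of_lt_one (by norm_num) (by norm_num)
  have := h1.comp log32_tendsto
  simpa [Function.comp_def, inv_pow] using this

lemma SS_tendsto : Tendsto SS atTop (nhds 0) := by
  apply squeeze_zero_norm (fun m => ?_) (by simpa using aux_tendsto.const_mul (3:ℝ))
  show ‖SS m‖ ≤ 3 * ((4:ℝ) ^ (Nat.log 32 m))⁻¹
  rw [Real.norm_eq_abs, SS_eq]
  have := Sblk_abs (Nat.log 32 m) (m - 32 ^ Nat.log 32 m)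
  rwa [akr_eq] at this

lemma hh_tendsto : Tendsto hh atTop (nhds 0) := by
  apply squeeze_zero_norm (fun n => ?_) (by simpa using aux_tendsto.const_mul (2:ℝ))
  show ‖hh n‖ ≤ 2 * ((4:ℝ) ^ (Nat.log 32 n))⁻¹
  rw [Real.norm_eq_abs, hh]
  have := hblk_abs_upper (Nat.log 32 n) (n - 32 ^ Nat.log 32 n)
  rwa [akr_eq] at this

/-- Partner involution swapping the two halves of a block. -/
def phi (n : ℕ) : ℕ :=
  if n - 32 ^ Nat.log 32 n < 2 * Nk (Nat.log 32 n) then n + 2 * Nk (Nat.log 32 n)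
  else n - 2 * Nk (Nat.log 32 n)

lemma phi_block {k r : ℕ} (hk : 1 ≤ k) (hr : r < 4 * Nk k) :
    phi (32 ^ k + r) =
      if r < 2 * Nk k then 32 ^ k + (r + 2 * Nk k) else 32 ^ k + (r - 2 * Nk k) := by
  rw [phi, log_block hk hr, Nat.add_sub_cancel_left]
  have hp : (0:ℕ) < 32 ^ k := by positivity
  split <;> omega

lemma phi_spec {k r : ℕ} (hk : 1 ≤ k) (hr : r < 4 * Nk k) :
    hh (phi (32 ^ k + r)) = - hh (32 ^ k + r) ∧ phi (32 ^ k + r) ≠ 32 ^ k + r ∧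
      phi (phi (32 ^ k + r)) = 32 ^ k + r := by
  have hN := Nk_pos k
  rcases Nat.lt_or_ge r (2 * Nk k) with h1 | h1
  · have e1 : phi (32 ^ k + r) = 32 ^ k + (r + 2 * Nk k) := by
      rw [phi_block hk hr, if_pos h1]
    have e2 : phi (32 ^ k + (r + 2 * Nk k)) = 32 ^ k + r := by
      rw [phi_block hk (by omega), if_neg (by omega)]
      congr 1
      omega
    refine ⟨?_, by omega, by rw [e1, e2]⟩
    rw [e1, hh_at hk (by omega), hh_at hk hr, hblk_flip hk h1]
  · have e1 : phi (32 ^ k + r) = 32 ^ k + (r - 2 * Nk k) := by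
      rw [phi_block hk hr, if_neg (by omega)]
    have e2 : phi (32 ^ k + (r - 2 * Nk k)) = 32 ^ k + r := by
      rw [phi_block hk (by omega), if_pos (by omega)]
      congr 1
      omega
    refine ⟨?_, by omega, by rw [e1, e2]⟩
    rw [e1, hh_at hk (by omega), hh_at hk hr]
    have := hblk_flip hk (show r - 2 * Nk k < 2 * Nk k by omega)
    rw [show r - 2 * Nk k + 2 * Nk k = r by omega] at this
    rw [this]
    ring

lemma phi_spec' {n : ℕ} (h : hh n ≠ 0) :
    hh (phi n) = - hh n ∧ phi n ≠ n ∧ phi (phi n) = n := by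
  obtain ⟨hk, hle, hr, he⟩ := hh_coord h
  rw [he]
  exact phi_spec hk hr

lemma ck_inj {k s s' : ℕ} (hs : s < 2 * Nk k) (hs' : s' < 2 * Nk k)
    (h : ck k s = ck k s') : s = s' := by
  have hN := Nk_pos k
  unfold ck at h
  split_ifs at h <;> omega

/-- Each nonzero level of `|hh|` has exactly the two elements `n`, `phi n`. -/
lemma level_two_block {k r k' r' : ℕ} (hk : 1 ≤ k) (hr : r < 4 * Nk k)
    (hk' : 1 ≤ k') (hr' : r' < 4 * Nk k')
    (he : |hblk k' r'| = |hblk k r|) :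
    32 ^ k' + r' = 32 ^ k + r ∨ 32 ^ k' + r' = phi (32 ^ k + r) := by
  have hNn := Nk_pos k
  have hkk : k = k' := by
    by_contra hne2
    have b1 : akr k ≤ |hblk k r| := hblk_abs_lower hk hr
    have b2 : |hblk k r| ≤ 2 * akr k := hblk_abs_upper k r
    have b3 : akr k' ≤ |hblk k' r'| := hblk_abs_lower hk' hr'
    have b4 : |hblk k' r'| ≤ 2 * akr k' := hblk_abs_upper k' r'
    rcases Nat.lt_or_ge k k' with hlt | hge
    · have := two_akr_succ k
      have h5 : akr k' ≤ akr (k + 1) := akr_anti hlt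
      linarith
    · have hlt : k' < k := by omega
      have := two_akr_succ k'
      have h5 : akr k ≤ akr (k' + 1) := akr_anti hlt
      linarith
  subst hkk
  rw [hblk_abs hk hr, hblk_abs hk hr'] at he
  have hu := (uk_pos k).ne'
  have hnat : (4 * Nk k * Nk k + ck k (r' % (2 * Nk k))) =
      (4 * Nk k * Nk k + ck k (r % (2 * Nk k))) := by
    exact_mod_cast mul_right_cancel₀ hu he
  have hcke : ck k (r' % (2 * Nk k)) = ck k (r % (2 * Nk k)) := by omega
  have hmod : r' % (2 * Nk k) = r % (2 * Nk k) :=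
    ck_inj (Nat.mod_lt _ (by omega)) (Nat.mod_lt _ (by omega)) hcke
  have hrm : r % (2 * Nk k) = if r < 2 * Nk k then r else r - 2 * Nk k := by
    split
    · exact Nat.mod_eq_of_lt (by omega)
    · rw [Nat.mod_eq_sub_mod (by omega)]
      exact Nat.mod_eq_of_lt (by omega)
  have hrm' : r' % (2 * Nk k) = if r' < 2 * Nk k then r' else r' - 2 * Nk k := by
    split
    · exact Nat.mod_eq_of_lt (by omega)
    · rw [Nat.mod_eq_sub_mod (by omega)]
      exact Nat.mod_eq_of_lt (by omega)
  rw [hrm, hrm'] at hmod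
  rw [phi_block hk hr]
  split_ifs at hmod ⊢ <;> omega

lemma level_two {n m : ℕ} (hn : hh n ≠ 0) (hm : hh m ≠ 0) (he : |hh m| = |hh n|) :
    m = n ∨ m = phi n := by
  obtain ⟨hk, hle, hr, hne⟩ := hh_coord hn
  obtain ⟨hk', hle', hr', hne'⟩ := hh_coord hm
  rw [hne, hh_at hk hr] at he
  rw [hne', hh_at hk' hr'] at he
  have h1 := level_two_block hk hr hk' hr' he
  rw [← hne, ← hne'] at h1
  exact h1

lemma support_unbounded (M : ℕ) : ∃ n, M ≤ n ∧ hh n ≠ 0 := by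
  refine ⟨32 ^ (M + 1), ?_, ?_⟩
  · calc M ≤ M + 1 := by omega
      _ ≤ 32 ^ (M + 1) := Nat.le_of_lt (Nat.lt_pow_self (by norm_num))
  · have : hh (32 ^ (M + 1) + 0) = hblk (M + 1) 0 :=
      hh_at (by omega) (by have := Nk_pos (M + 1); omega)
    rw [Nat.add_zero] at this
    rw [this]
    exact hblk_ne_zero (by omega) (by have := Nk_pos (M + 1); omega)

/-- Sums over greedy sets are controlled by twice the smallest magnitude. -/
lemma greedy_sum_le {B : Finset ℕ} (hB : GreedySet hh B) (hne : B.Nonempty) :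
    ∃ n₀ ∈ B, (∀ m ∈ B, |hh n₀| ≤ |hh m|) ∧ |oneStar hh B| ≤ 2 * |hh n₀| := by
  obtain ⟨n₀, hn₀B, hmin⟩ := Finset.exists_min_image B (fun n => |hh n|) hne
  refine ⟨n₀, hn₀B, hmin, ?_⟩
  have hn₀ : hh n₀ ≠ 0 := by
    intro h0
    obtain ⟨n, hnM, hn⟩ := support_unbounded (B.sup id + 1)
    have hnB : n ∉ B := by
      intro hmem
      have := Finset.le_sup (f := id) hmem
      simp at this
      omega
    have := hB n₀ hn₀B n hnB
    rw [h0, abs_zero] at this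
    exact hn (abs_eq_zero.1 (le_antisymm this (abs_nonneg _)))
  have ht : 0 < |hh n₀| := abs_pos.2 hn₀
  set t := |hh n₀| with htdef
  have hsplit := Finset.sum_filter_add_sum_filter_not B (fun n => t < |hh n|) hh
  have hF1 : ∑ n ∈ B.filter (fun n => t < |hh n|), hh n = 0 := by
    apply Finset.sum_involution (fun n _ => phi n)
    · intro a ha
      have haB := Finset.mem_filter.1 ha
      have hane : hh a ≠ 0 := by
        intro h0; rw [h0, abs_zero] at haB; linarith [haB.2]
      obtain ⟨hϕ1, hϕ2, hϕ3⟩ := phi_spec' hane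
      rw [hϕ1]; ring
    · intro a ha _
      have haB := Finset.mem_filter.1 ha
      have hane : hh a ≠ 0 := by
        intro h0; rw [h0, abs_zero] at haB; linarith [haB.2]
      exact (phi_spec' hane).2.1
    · intro a ha
      have haB := Finset.mem_filter.1 ha
      have hane : hh a ≠ 0 := by
        intro h0; rw [h0, abs_zero] at haB; linarith [haB.2]
      obtain ⟨hϕ1, hϕ2, hϕ3⟩ := phi_spec' hane
      have habs : |hh (phi a)| = |hh a| := by rw [hϕ1, abs_neg]
      have hmem : phi a ∈ B := by
        by_contra hnot
        have := hB n₀ hn₀B (phi a) hnot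
        rw [habs] at this
        linarith [haB.2]
      exact Finset.mem_filter.2 ⟨hmem, by rw [habs]; exact haB.2⟩
    · intro a ha
      have haB := Finset.mem_filter.1 ha
      have hane : hh a ≠ 0 := by
        intro h0; rw [h0, abs_zero] at haB; linarith [haB.2]
      exact (phi_spec' hane).2.2
  have hF2 : |∑ n ∈ B.filter (fun n => ¬ t < |hh n|), hh n| ≤ 2 * t := by
    have hsub : B.filter (fun n => ¬ t < |hh n|) ⊆ insert n₀ {phi n₀} := by
      intro n hn
      have hnB := Finset.mem_filter.1 hn
      have heq : |hh n| = t := le_antisymm (not_lt.1 hnB.2) (hmin n hnB.1)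
      have hnne : hh n ≠ 0 := by
        intro h0; rw [h0, abs_zero] at heq; linarith
      rcases level_two hn₀ hnne heq with h | h
      · simp [h]
      · simp [h]
    calc |∑ n ∈ B.filter (fun n => ¬ t < |hh n|), hh n|
        ≤ ∑ n ∈ B.filter (fun n => ¬ t < |hh n|), |hh n| :=
          Finset.abs_sum_le_sum_abs _ _
      _ ≤ ∑ n ∈ insert n₀ ({phi n₀} : Finset ℕ), |hh n| :=
          Finset.sum_le_sum_of_subset_of_nonneg hsub (fun _ _ _ => abs_nonneg _)
      _ ≤ 2 * t := by
        obtain ⟨hϕ1, hϕ2, hϕ3⟩ := phi_spec' hn₀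
        rw [Finset.sum_insert (Finset.notMem_singleton.2 (Ne.symm hϕ2)),
          Finset.sum_singleton, hϕ1, abs_neg]
        linarith
  rw [oneStar, ← hsplit, hF1, zero_add]
  exact hF2

lemma hh_pow32 {K : ℕ} (hK : 1 ≤ K) : hh (32 ^ K) = hblk K 0 := by
  have := hh_at hK (show 0 < 4 * Nk K by have := Nk_pos K; omega)
  rwa [Nat.add_zero] at this

lemma block_bound_mono {k K : ℕ} (h : k ≤ K) : 32 ^ k + 4 * Nk k ≤ 32 ^ K + 4 * Nk K := by
  have h1 : (32:ℕ) ^ k ≤ 32 ^ K := Nat.pow_le_pow_right (by norm_num) h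
  have h2 : Nk k ≤ Nk K := Nat.pow_le_pow_right (by norm_num) h
  omega

/-- Members of blocks past `K` have small magnitude. -/
lemma tail_small {m K : ℕ} (hm : hh m ≠ 0) (hge : 32 ^ K + 4 * Nk K ≤ m) :
    |hh m| ≤ 2 * akr (K + 1) := by
  obtain ⟨hk, hle, hr, hne⟩ := hh_coord hm
  have hKk : K + 1 ≤ Nat.log 32 m := by
    by_contra hlt
    have h1 : Nat.log 32 m ≤ K := by omega
    have := block_bound_mono h1
    omega
  calc |hh m| ≤ 2 * akr (Nat.log 32 m) := by
        rw [hh]; exact hblk_abs_upper _ _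
    _ ≤ 2 * akr (K + 1) := by linarith [akr_anti hKk]

/-- Members of the first `K` blocks have magnitude at least `akr K`. -/
lemma head_large {n K : ℕ} (hK : 1 ≤ K) (hn : hh n ≠ 0) (hlt : n < 32 ^ K + 4 * Nk K) :
    akr K ≤ |hh n| := by
  obtain ⟨hk, hle, hr, hne⟩ := hh_coord hn
  have hkK : Nat.log 32 n ≤ K := by
    by_contra hgt
    have h1 : (32:ℕ) ^ (K + 1) ≤ 32 ^ Nat.log 32 n := Nat.pow_le_pow_right (by norm_num) (by omega)
    have h2 : 32 ^ K + 4 * Nk K ≤ 32 ^ (K + 1) := by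
      have h16 : Nk K ≤ 32 ^ K := Nat.pow_le_pow_left (by norm_num) K
      have : (32:ℕ) ^ (K + 1) = 32 * 32 ^ K := by rw [pow_succ]; ring
      omega
    omega
  calc akr K ≤ akr (Nat.log 32 n) := akr_anti hkK
    _ ≤ |hh n| := by rw [hh]; exact hblk_abs_lower hk hr

/-- The full initial segment of blocks is a greedy set, and sums over greedy supersets are small. -/
lemma greedy_lim_aux (ε : ℝ) (hε : 0 < ε) :
    ∃ A : Finset ℕ, GreedySet hh A ∧
      ∀ B : Finset ℕ, GreedySet hh B → A ⊆ B → |oneStar hh B - 0| < ε := by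
  obtain ⟨K₀, hK₀⟩ := exists_pow_lt_of_lt_one (show (0:ℝ) < ε/4 by linarith)
    (show (1:ℝ)/4 < 1 by norm_num)
  set K := K₀ + 1 with hKdef
  have hK : 1 ≤ K := by omega
  have hKε : akr K < ε / 4 := by
    rw [akr_eq]
    calc ((4:ℝ) ^ K)⁻¹ = ((1:ℝ)/4) ^ K := by rw [one_div, inv_pow]
      _ ≤ ((1:ℝ)/4) ^ K₀ := pow_le_pow_of_le_one (by norm_num) (by norm_num) (by omega)
      _ < ε / 4 := hK₀
  refine ⟨(Finset.range (32 ^ K + 4 * Nk K)).filter (fun n => hh n ≠ 0), ?_, ?_⟩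
  · intro n hn m hm
    have hn' := Finset.mem_filter.1 hn
    have hnlt := Finset.mem_range.1 hn'.1
    have hlarge := head_large hK hn'.2 hnlt
    by_cases hm0 : hh m = 0
    · rw [hm0, abs_zero]; linarith [akr_pos K]
    · have hge : 32 ^ K + 4 * Nk K ≤ m := by
        by_contra hlt2
        exact hm (Finset.mem_filter.2 ⟨Finset.mem_range.2 (by omega), hm0⟩)
      have := tail_small hm0 hge
      have := two_akr_succ K
      linarith
  · intro B hB hAB
    have h0 : hh (32 ^ K) ≠ 0 := by
      rw [hh_pow32 hK]
      exact hblk_ne_zero hK (by have := Nk_pos K; omega)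
    have hmem : 32 ^ K ∈ B := hAB (Finset.mem_filter.2
      ⟨Finset.mem_range.2 (by have := Nk_pos K; omega), h0⟩)
    obtain ⟨n₀, hn₀B, hmin, hbound⟩ := greedy_sum_le hB ⟨_, hmem⟩
    have h1 : |hh n₀| ≤ |hh (32 ^ K)| := hmin _ hmem
    have h2 : |hh (32 ^ K)| ≤ 2 * akr K := by
      rw [hh_pow32 hK]; exact hblk_abs_upper _ _
    rw [sub_zero]
    calc |oneStar hh B| ≤ 2 * |hh n₀| := hbound
      _ ≤ 4 * akr K := by linarith
      _ < ε := by linarith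

lemma Nakr (k : ℕ) : (Nk k : ℝ) * akr k = 4 ^ k := by
  rw [akr_eq]
  have : ((Nk k : ℕ) : ℝ) = 4 ^ k * 4 ^ k := by
    rw [Nk]
    push_cast
    rw [show (16:ℝ) = 4 * 4 by norm_num, mul_pow]
  rw [this]
  field_simp

/-- The greedy sets witnessing `BNorm hh = ⊤`. -/
lemma bnorm_unbounded (k : ℕ) (hk : 1 ≤ k) :
    ∃ A : Finset ℕ, GreedySet hh A ∧
      (4:ℝ) ^ k ≤ |oneStar hh (Finset.Icc (32 ^ k) (32 ^ k + (2 * Nk k - 1)) \ A)| := by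
  have hN := Nk_pos k
  have hu := uk_pos k
  set TT : ℝ := ((4 * Nk k * Nk k + (Nk k - 1) : ℕ) : ℝ) * uk k with hTT
  have hakrTT : akr k ≤ TT := by
    rw [akr, hTT]
    have : ((4 * Nk k * Nk k : ℕ) : ℝ) ≤ ((4 * Nk k * Nk k + (Nk k - 1) : ℕ) : ℝ) := by
      exact_mod_cast Nat.le_add_right _ _
    exact mul_le_mul_of_nonneg_right this hu.le
  set A : Finset ℕ := (Finset.range (32 ^ k + 4 * Nk k)).filter (fun n => TT < |hh n|)
    with hA
  have hblkabs : ∀ r, r < 2 * Nk k →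
      |hh (32 ^ k + r)| = ((4 * Nk k * Nk k + ck k r : ℕ) : ℝ) * uk k := by
    intro r hr
    rw [hh_at hk (by omega), hblk_abs hk (by omega), Nat.mod_eq_of_lt (by omega)]
  -- membership in `A` for first-half elements is exactly evenness of the offset
  have hmemA : ∀ r, r < 2 * Nk k → ((32 ^ k + r) ∈ A ↔ r % 2 = 0) := by
    intro r hr
    rw [hA, Finset.mem_filter, Finset.mem_range]
    constructor
    · rintro ⟨-, hlt⟩
      by_contra hodd
      rw [hblkabs r hr] at hlt
      have hck : ck k r ≤ Nk k - 1 := by unfold ck; rw [if_neg hodd]; omega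
      have : ((4 * Nk k * Nk k + ck k r : ℕ) : ℝ) ≤ ((4 * Nk k * Nk k + (Nk k - 1) : ℕ) : ℝ) := by
        exact_mod_cast by omega
      nlinarith
    · intro heven
      refine ⟨by omega, ?_⟩
      rw [hblkabs r hr]
      have hck : Nk k ≤ ck k r := by unfold ck; rw [if_pos heven]; omega
      have : ((4 * Nk k * Nk k + (Nk k - 1) : ℕ) : ℝ) < ((4 * Nk k * Nk k + ck k r : ℕ) : ℝ) := by
        exact_mod_cast by omega
      rw [hTT]
      nlinarith
  refine ⟨A, ?_, ?_⟩
  · -- A is greedy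
    intro n hn m hm
    have hn' := Finset.mem_filter.1 hn
    have hnTT : TT < |hh n| := hn'.2
    by_cases hm0 : hh m = 0
    · rw [hm0, abs_zero]; linarith [akr_pos k, hakrTT]
    rcases Nat.lt_or_ge m (32 ^ k + 4 * Nk k) with hlt | hge
    · have : ¬ TT < |hh m| := fun hc =>
        hm (Finset.mem_filter.2 ⟨Finset.mem_range.2 hlt, hc⟩)
      linarith [not_lt.1 this]
    · have h1 := tail_small hm0 hge
      have h2 := two_akr_succ k
      linarith
  · -- the interval minus A consists of the odd first-half offsets
    have hE : Finset.Icc (32 ^ k) (32 ^ k + (2 * Nk k - 1)) \ A =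
        (Finset.range (Nk k)).image (fun i => 32 ^ k + (2 * i + 1)) := by
      ext n
      simp only [Finset.mem_sdiff, Finset.mem_Icc, Finset.mem_image, Finset.mem_range]
      constructor
      · rintro ⟨⟨h1, h2⟩, hnA⟩
        set r := n - 32 ^ k with hrdef
        have hr : r < 2 * Nk k := by omega
        have hodd : r % 2 = 1 := by
          by_contra hodd
          have heven : r % 2 = 0 := by omega
          have hmem2 : (32 ^ k + r) ∈ A := (hmemA r hr).2 heven
          rw [show 32 ^ k + r = n by omega] at hmem2
          exact hnA hmem2
        exact ⟨r / 2, by omega, by omega⟩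
      · rintro ⟨i, hi, rfl⟩
        have hr : 2 * i + 1 < 2 * Nk k := by omega
        refine ⟨⟨by omega, by omega⟩, ?_⟩
        intro hmem
        have := (hmemA (2 * i + 1) hr).1 hmem
        omega
    rw [hE, oneStar, Finset.sum_image (fun x _ y _ h => by simp at h; omega)]
    have hterm : ∀ i ∈ Finset.range (Nk k), hh (32 ^ k + (2 * i + 1)) ≤ - akr k := by
      intro i hi
      have hiN : i < Nk k := Finset.mem_range.1 hi
      rw [hh_at hk (by omega), hblk_odd hk hiN]
      rw [akr]
      have : ((4 * Nk k * Nk k : ℕ) : ℝ) ≤ ((4 * Nk k * Nk k + (Nk k - 1 - i) : ℕ) : ℝ) := by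
        exact_mod_cast Nat.le_add_right _ _
      nlinarith
    have hsum : ∑ i ∈ Finset.range (Nk k), hh (32 ^ k + (2 * i + 1)) ≤
        ∑ _i ∈ Finset.range (Nk k), (- akr k) := Finset.sum_le_sum hterm
    rw [Finset.sum_const, Finset.card_range, nsmul_eq_mul] at hsum
    have hfin : (Nk k : ℝ) * (- akr k) = - (4 ^ k) := by
      have := Nakr k; linarith [Nakr k]
    rw [hfin] at hsum
    have h4 : (0:ℝ) < 4 ^ k := by positivity
    calc (4:ℝ) ^ k ≤ - ∑ i ∈ Finset.range (Nk k), hh (32 ^ k + (2 * i + 1)) := by linarith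
      _ ≤ |∑ i ∈ Finset.range (Nk k), hh (32 ^ k + (2 * i + 1))| := neg_le_abs _


/-- `hh` lies in `𝔸`. -/
lemma memA : MemA hh := by
  refine ⟨hh_tendsto, 0, ?_⟩
  intro ε hε
  exact greedy_lim_aux ε hε

/-- `hh` lies in `𝒔`. -/
lemma memSeries : MemSeries hh := ⟨0, SS_tendsto⟩

/-- `‖hh‖_𝔹 = ∞`. -/
lemma bnorm_top : BNorm hh = ⊤ := by
  by_contra hne
  obtain ⟨k, hk4⟩ := pow_unbounded_of_one_lt ((BNorm hh).toReal) (show (1:ℝ) < 4 by norm_num)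
  obtain ⟨A, hA, hge⟩ := bnorm_unbounded (k + 1) (by omega)
  have habs : (0:ℝ) ≤ |oneStar hh (Finset.Icc (32 ^ (k+1)) (32 ^ (k+1) + (2 * Nk (k+1) - 1)) \ A)| :=
    abs_nonneg _
  have h1 : ENNReal.ofReal ((4:ℝ) ^ (k + 1)) ≤ BNorm hh := by
    calc ENNReal.ofReal ((4:ℝ) ^ (k + 1))
        ≤ ENNReal.ofReal |oneStar hh
            (Finset.Icc (32 ^ (k+1)) (32 ^ (k+1) + (2 * Nk (k+1) - 1)) \ A)| :=
          ENNReal.ofReal_le_ofReal hge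
      _ ≤ beta hh A := by
          rw [beta]
          exact le_iSup_of_le (32 ^ (k+1)) (le_iSup_of_le (32 ^ (k+1) + (2 * Nk (k+1) - 1)) le_rfl)
      _ ≤ BNorm hh := by
          rw [BNorm]
          exact le_iSup₂_of_le A hA le_rfl
  have h2 : (4:ℝ) ^ (k + 1) ≤ (BNorm hh).toReal := by
    have := ENNReal.toReal_mono hne h1
    rwa [ENNReal.toReal_ofReal (by positivity)] at this
  have h3 : (4:ℝ) ^ k ≤ 4 ^ (k + 1) := by
    have := pow_le_pow_right₀ (show (1:ℝ) ≤ 4 by norm_num) (show k ≤ k + 1 by omega)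
    exact this
  linarith

end Stmt13

/-- there is `h ∈ 𝔸 ∩ 𝒔` with `‖h‖_𝔹 = ∞`; in particular
`𝔸 ∩ 𝒔 ⊄ 𝔹`. -/
theorem stmt_13 :
    (∃ h : ℕ → ℝ, MemA h ∧ MemSeries h ∧ BNorm h = ⊤) ∧
    ¬ ∀ f : ℕ → ℝ, MemA f → MemSeries f → MemB f := by
  have hex : ∃ h : ℕ → ℝ, MemA h ∧ MemSeries h ∧ BNorm h = ⊤ :=
    ⟨Stmt13.hh, Stmt13.memA, Stmt13.memSeries, Stmt13.bnorm_top⟩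
  refine ⟨hex, fun Hall => ?_⟩
  obtain ⟨f, hA, hS, hB⟩ := hex
  have := Hall f hA hS
  rw [MemB, hB] at this
  exact lt_irrefl _ this
end

section
/- There exists h : ℕ → ℝ with h ∈ 𝔸 ∩ 𝒔 ∩ 𝔹 but h ∉ 𝔹₀; in particular, 𝔸 ∩ 𝒔 ∩ 𝔹 is not contained in 𝔹₀. -/
open Filter ENNReal
open scoped Classical

noncomputable section StmtFourteen
open Finset

private def KK (q : ℕ) : ℕ := Nat.log 2 (q+1)

private noncomputable def nu (q : ℕ) : ℝ :=
  (10 * 2^(KK q) - (2*(q:ℝ)+3)) / (8 * 4^(KK q))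

private lemma KK_le (q : ℕ) : 2^(KK q) ≤ q + 1 := Nat.pow_log_le_self 2 (Nat.succ_ne_zero q)

private lemma KK_lt (q : ℕ) : q + 1 < 2^(KK q + 1) :=
  Nat.lt_pow_succ_log_self (by norm_num) (q+1)

private lemma KK_zero : KK 0 = 0 := Nat.log_one_right 2

private lemma nu_zero : nu 0 = 7/8 := by simp [nu, KK_zero]; norm_num

private lemma nat_bound (q : ℕ) : (2*(q:ℝ)+3) ≤ 4 * 2^(KK q) := by
  have h := KK_lt q
  have hpow : (2:ℕ)^(KK q + 1) = 2 * 2^(KK q) := by ring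
  have h3 : 2*q + 3 ≤ 4 * 2^(KK q) := by omega
  calc (2*(q:ℝ)+3) = ((2*q+3 : ℕ) : ℝ) := by push_cast; ring
    _ ≤ ((4 * 2^(KK q) : ℕ) : ℝ) := by exact_mod_cast h3
    _ = 4 * 2^(KK q) := by push_cast; ring

private lemma two_pow_ge_one (k : ℕ) : (1:ℝ) ≤ 2^k := one_le_pow₀ (by norm_num)

private lemma nu_pos (q : ℕ) : 0 < nu q := by
  apply div_pos
  · have h1 := nat_bound q
    have h2 : (1:ℝ) ≤ 2^(KK q) := two_pow_ge_one _
    nlinarith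
  · positivity

private lemma four_pow (k : ℕ) : (4:ℝ)^k = 2^k * 2^k := by
  rw [show (4:ℝ) = 2*2 by norm_num, mul_pow]

private lemma cast_pow_bound (q : ℕ) : ((q:ℝ) + 1) ≤ 2 * 2^(KK q) := by
  have h := KK_lt q
  have h2 : q + 1 ≤ 2 * 2^(KK q) := by
    have hpow : (2:ℕ)^(KK q + 1) = 2 * 2^(KK q) := by ring
    omega
  calc ((q:ℝ)+1) = ((q+1:ℕ):ℝ) := by push_cast; ring
    _ ≤ ((2 * 2^(KK q) : ℕ):ℝ) := by exact_mod_cast h2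
    _ = 2 * 2^(KK q) := by push_cast; ring

private lemma nu_le (q : ℕ) : nu q ≤ (5/2) / ((q:ℝ)+1) := by
  have hq : (0:ℝ) < (q:ℝ)+1 := by positivity
  have hx : (1:ℝ) ≤ 2^(KK q) := two_pow_ge_one _
  have h2 := cast_pow_bound q
  rw [nu, four_pow, div_le_div_iff₀ (by positivity) hq]
  nlinarith [nat_bound q]

private lemma nu_succ_lt (q : ℕ) : nu (q+1) < nu q := by
  have h1 := KK_le q
  have h2 := KK_lt q
  have hpow : (2:ℕ)^(KK q + 1) = 2 * 2^(KK q) := by ring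
  have hx : (1:ℝ) ≤ 2^(KK q) := two_pow_ge_one _
  rcases lt_or_eq_of_le (show q + 2 ≤ 2^(KK q + 1) by omega) with hc | hc
  · have hK : KK (q+1) = KK q := Nat.log_eq_of_pow_le_of_lt_pow (by omega) hc
    rw [nu, nu, hK, div_lt_div_iff₀ (by positivity) (by positivity)]
    push_cast
    nlinarith [pow_pos (show (0:ℝ) < 4 by norm_num) (KK q)]
  · have hK : KK (q+1) = KK q + 1 := by
      have he : q + 1 + 1 = 2^(KK q + 1) := by omega
      rw [KK, he, Nat.log_pow (by norm_num)]
    have hq : ((q:ℝ)+2) = 2^(KK q + 1) := by exact_mod_cast hc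
    rw [nu, nu, hK, div_lt_div_iff₀ (by positivity) (by positivity)]
    push_cast
    rw [pow_succ, pow_succ] at *
    nlinarith [pow_pos (show (0:ℝ) < 4 by norm_num) (KK q)]

private lemma nu_strictAnti : StrictAnti nu := strictAnti_nat_of_succ_lt nu_succ_lt

private lemma nu_anti : Antitone nu := nu_strictAnti.antitone

private lemma nu_le_nu0 (q : ℕ) : nu q ≤ nu 0 := nu_anti (Nat.zero_le q)

private lemma nu_rec (q : ℕ) : nu q = nu (2*q+1) + nu (2*q+2) := by
  have h1 := KK_le q
  have h2 := KK_lt q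
  have hpow : (2:ℕ)^(KK q + 1) = 2 * 2^(KK q) := by ring
  have hK1 : KK (2*q+1) = KK q + 1 :=
    Nat.log_eq_of_pow_le_of_lt_pow (by omega) (by rw [pow_succ]; omega)
  have hK2 : KK (2*q+2) = KK q + 1 :=
    Nat.log_eq_of_pow_le_of_lt_pow (by omega) (by rw [pow_succ]; omega)
  rw [nu, nu, nu, hK1, hK2]
  have h4 : (4:ℝ)^(KK q) > 0 := by positivity
  rw [pow_succ, pow_succ]
  push_cast
  field_simp
  ring

private lemma sum_doubling (a b : ℕ) :
    ∑ t ∈ Ico a b, (nu (2*t+1) + nu (2*t+2)) = ∑ t ∈ Ico (2*a+1) (2*b+1), nu t := by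
  induction b with
  | zero => simp [show Ico (2*a+1) 1 = ∅ from Ico_eq_empty (by omega)]
  | succ b ih =>
    rcases le_or_gt a b with hab | hab
    · rw [Finset.sum_Ico_succ_top hab,
        show 2*(b+1)+1 = (2*b+1)+1+1 by ring,
        Finset.sum_Ico_succ_top (by omega), Finset.sum_Ico_succ_top (by omega), ih]
      ring
    · rw [Ico_eq_empty (by omega), Ico_eq_empty (by omega)]; simp

private lemma sum_level (k : ℕ) : ∑ t ∈ Ico (2^k - 1) (2^(k+1) - 1), nu t = nu 0 := by
  induction k with
  | zero => simp
  | succ k ih =>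
    have h1 : (1:ℕ) ≤ 2^k := Nat.one_le_two_pow
    have h2 : (1:ℕ) ≤ 2^(k+1) := Nat.one_le_two_pow
    have e1 : 2^(k+1) - 1 = 2*(2^k - 1)+1 := by rw [pow_succ]; omega
    have e2 : 2^(k+1+1) - 1 = 2*(2^(k+1) - 1)+1 := by rw [pow_succ 2 (k+1)]; omega
    rw [e1, e2, ← sum_doubling, ← ih]
    apply Finset.sum_congr rfl
    intro t _
    exact (nu_rec t).symm

private lemma sum_window {a b : ℕ} (h : b ≤ 2*a + 2) : ∑ t ∈ Ico a b, nu t ≤ 2 * nu 0 := by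
  have h1 := KK_le a
  have h2 := KK_lt a
  have hpow : (2:ℕ)^(KK a + 1) = 2 * 2^(KK a) := by ring
  have hpow2 : (2:ℕ)^(KK a + 1 + 1) = 4 * 2^(KK a) := by ring
  have hsub : Ico a b ⊆ Ico (2^(KK a) - 1) (2^(KK a + 1 + 1) - 1) := by
    apply Ico_subset_Ico <;> omega
  calc ∑ t ∈ Ico a b, nu t ≤ ∑ t ∈ Ico (2^(KK a) - 1) (2^(KK a +1+1) - 1), nu t :=
        Finset.sum_le_sum_of_subset_of_nonneg hsub (fun i _ _ => (nu_pos i).le)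
    _ = 2 * nu 0 := by
        rw [← Finset.sum_Ico_consecutive nu (show 2^(KK a) - 1 ≤ 2^(KK a + 1) - 1 by
              have := Nat.pow_le_pow_right (show 1 ≤ 2 by norm_num) (Nat.le_succ (KK a)); omega)
          (show 2^(KK a + 1) - 1 ≤ 2^(KK a + 1 + 1) - 1 by
              have := Nat.pow_le_pow_right (show 1 ≤ 2 by norm_num) (Nat.le_succ (KK a + 1)); omega),
          sum_level, sum_level]
        ring

private def pairIdx (n : ℕ) : ℕ :=
  if n % 3 = 1 then n / 3 else if n % 3 = 2 then (2*n-1)/3 else 2*n/3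

private def hh (n : ℕ) : ℝ := (if n % 3 = 1 then (-1:ℝ) else 1) * nu (pairIdx n)

private lemma pairIdx_neg (t : ℕ) : pairIdx (3*t+1) = t := by
  have h : (3*t+1) % 3 = 1 := by omega
  rw [pairIdx, if_pos h]; omega

private lemma pairIdx_p1 (t : ℕ) : pairIdx (3*t+2) = 2*t+1 := by
  have h1 : (3*t+2) % 3 ≠ 1 := by omega
  have h2 : (3*t+2) % 3 = 2 := by omega
  rw [pairIdx, if_neg h1, if_pos h2]; omega

private lemma pairIdx_p2 (t : ℕ) : pairIdx (3*t+3) = 2*t+2 := by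
  have h1 : (3*t+3) % 3 ≠ 1 := by omega
  have h2 : (3*t+3) % 3 ≠ 2 := by omega
  rw [pairIdx, if_neg h1, if_neg h2]; omega

private lemma pairIdx_zero : pairIdx 0 = 0 := by rw [pairIdx]; norm_num

private lemma hh_neg (t : ℕ) : hh (3*t+1) = -nu t := by
  rw [hh, pairIdx_neg, if_pos (by omega : (3*t+1) % 3 = 1)]; ring

private lemma hh_p1 (t : ℕ) : hh (3*t+2) = nu (2*t+1) := by
  rw [hh, pairIdx_p1, if_neg (by omega : ¬ (3*t+2) % 3 = 1)]; ring

private lemma hh_p2 (t : ℕ) : hh (3*t+3) = nu (2*t+2) := by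
  rw [hh, pairIdx_p2, if_neg (by omega : ¬ (3*t+3) % 3 = 1)]; ring

private lemma hh_zero : hh 0 = nu 0 := by
  rw [hh, pairIdx_zero, if_neg (by omega : ¬ (0:ℕ) % 3 = 1)]; ring

private lemma abs_hh (n : ℕ) : |hh n| = nu (pairIdx n) := by
  rw [hh]
  by_cases h : n % 3 = 1
  · rw [if_pos h, neg_one_mul, abs_neg, abs_of_pos (nu_pos _)]
  · rw [if_neg h, one_mul, abs_of_pos (nu_pos _)]

-- fiber structure
private lemma pairIdx_fiber {n q : ℕ} (h : pairIdx n = q) : n = 3*q+1 ∨ n = (3*q+1)/2 := by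
  obtain ⟨t, ht⟩ : ∃ t, n = 3*t ∨ n = 3*t+1 ∨ n = 3*t+2 := ⟨n/3, by omega⟩
  rcases ht with rfl | rfl | rfl
  · rcases Nat.eq_zero_or_pos t with rfl | hpos
    · rw [show 3*0 = 0 by ring, pairIdx_zero] at h; omega
    · obtain ⟨s, rfl⟩ : ∃ s, t = s + 1 := ⟨t-1, by omega⟩
      rw [show 3*(s+1) = 3*s+3 by ring, pairIdx_p2] at h
      right; omega
  · rw [pairIdx_neg] at h; left; omega
  · rw [pairIdx_p1] at h; right; omega

private lemma le_pairIdx (n : ℕ) : n ≤ 3 * pairIdx n + 1 := by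
  rcases pairIdx_fiber (rfl : pairIdx n = pairIdx n) with h | h <;> omega

private lemma pairIdx_lower (n : ℕ) : n + 2 ≤ 3 * (pairIdx n + 1) := by
  rcases pairIdx_fiber (rfl : pairIdx n = pairIdx n) with h | h <;> omega

private lemma pairIdx_pos_val (q : ℕ) : pairIdx ((3*q+1)/2) = q ∧ ¬ ((3*q+1)/2) % 3 = 1 := by
  obtain ⟨s, hs⟩ : ∃ s, q = 2*s ∨ q = 2*s+1 := ⟨q/2, by omega⟩
  rcases hs with rfl | rfl
  · rcases Nat.eq_zero_or_pos s with rfl | hpos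
    · norm_num [pairIdx_zero]
    · have : (3*(2*s)+1)/2 = 3*(s-1)+3 := by omega
      rw [this, pairIdx_p2]
      constructor
      · omega
      · omega
  · have : (3*(2*s+1)+1)/2 = 3*s+2 := by omega
    rw [this, pairIdx_p1]
    constructor
    · omega
    · omega

private lemma hh_pos_val (q : ℕ) : hh ((3*q+1)/2) = nu q := by
  obtain ⟨h1, h2⟩ := pairIdx_pos_val q
  rw [hh, h1, if_neg h2, one_mul]

private def SS (P : ℕ) : ℝ := ∑ n ∈ range P, hh n

private lemma SS_1 (m : ℕ) : SS (3*m+1) = nu 0 := by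
  induction m with
  | zero => simp [SS, hh_zero]
  | succ m ih =>
    have e : 3*(m+1)+1 = (3*m+1)+1+1+1 := by ring
    rw [SS, e, Finset.sum_range_succ, Finset.sum_range_succ, Finset.sum_range_succ, ← SS, ih,
      show (3*m+1)+1+1 = 3*m+3 by ring, show (3*m+1)+1 = 3*m+2 by ring,
      hh_neg, hh_p1, hh_p2]
    have := nu_rec m
    linarith

private lemma SS_2 (m : ℕ) : SS (3*m+2) = nu 0 - nu m := by
  rw [SS, show 3*m+2 = (3*m+1)+1 by ring, Finset.sum_range_succ, ← SS, SS_1, hh_neg]; ring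

private lemma SS_3 (m : ℕ) : SS (3*m+3) = nu 0 - nu (2*m+2) := by
  rw [SS, show 3*m+3 = (3*m+2)+1 by ring, Finset.sum_range_succ, ← SS, SS_2, hh_p1]
  have := nu_rec m
  linarith

private lemma SS_bound (P : ℕ) : |SS P| ≤ 2 := by
  have h0 := nu_zero
  obtain ⟨m, hm⟩ : ∃ m, P = 0 ∨ P = 3*m+1 ∨ P = 3*m+2 ∨ P = 3*m+3 := ⟨(P-1)/3, by omega⟩
  rcases hm with rfl | rfl | rfl | rfl
  · simp [SS]
  · rw [SS_1]; rw [abs_of_pos (by linarith)]; linarith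
  · rw [SS_2]
    have h1 := nu_pos m; have h2 := nu_le_nu0 m
    rw [abs_of_nonneg (by linarith)]; linarith
  · rw [SS_3]
    have h1 := nu_pos (2*m+2); have h2 := nu_le_nu0 (2*m+2)
    rw [abs_of_nonneg (by linarith)]; linarith

private lemma SS_dist (P : ℕ) (h : 1 ≤ P) : |SS P - nu 0| ≤ nu ((P-1)/3) := by
  obtain ⟨m, hm⟩ : ∃ m, P = 3*m+1 ∨ P = 3*m+2 ∨ P = 3*m+3 := ⟨(P-1)/3, by omega⟩
  rcases hm with rfl | rfl | rfl
  · rw [SS_1, sub_self, abs_zero]; exact (nu_pos _).le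
  · rw [SS_2, show nu 0 - nu m - nu 0 = -nu m by ring, abs_neg,
      abs_of_pos (nu_pos m), show (3*m+2-1)/3 = m by omega]
  · rw [SS_3, show nu 0 - nu (2*m+2) - nu 0 = -nu (2*m+2) by ring, abs_neg,
      abs_of_pos (nu_pos _), show (3*m+3-1)/3 = m by omega]
    exact nu_anti (by omega)

private def cc (Q t : ℕ) : ℝ :=
  (if t < Q then -nu t else 0) + (if 2*t+1 < Q then nu (2*t+1) else 0)
    + (if 2*t+2 < Q then nu (2*t+2) else 0)

private def GG (Q P : ℕ) : ℝ := ∑ n ∈ range P, (if pairIdx n < Q then hh n else 0)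

private lemma GG_1 (Q m : ℕ) : GG Q (3*m+1) = (if 0 < Q then nu 0 else 0) + ∑ t ∈ range m, cc Q t := by
  induction m with
  | zero => simp [GG, pairIdx_zero, hh_zero]
  | succ m ih =>
    have e : 3*(m+1)+1 = (3*m+1)+1+1+1 := by ring
    rw [GG, e, Finset.sum_range_succ, Finset.sum_range_succ, Finset.sum_range_succ, ← GG, ih,
      show (3*m+1)+1+1 = 3*m+3 by ring, show (3*m+1)+1 = 3*m+2 by ring,
      pairIdx_neg, pairIdx_p1, pairIdx_p2, hh_neg, hh_p1, hh_p2,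
      Finset.sum_range_succ, cc]
    ring

private lemma cc_abs (Q t : ℕ) : |cc Q t| ≤ nu t := by
  rw [cc]
  rcases lt_or_ge t Q with h1 | h1
  · rw [if_pos h1]
    rcases lt_or_ge (2*t+1) Q with h2 | h2
    · rw [if_pos h2]
      rcases lt_or_ge (2*t+2) Q with h3 | h3
      · rw [if_pos h3]
        have := nu_rec t
        rw [show -nu t + nu (2*t+1) + nu (2*t+2) = 0 by linarith, abs_zero]
        exact (nu_pos t).le
      · rw [if_neg (by omega)]
        have := nu_rec t
        rw [show -nu t + nu (2*t+1) + 0 = -nu (2*t+2) by linarith, abs_neg,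
          abs_of_pos (nu_pos _)]
        exact nu_anti (by omega)
    · rw [if_neg (by omega), if_neg (by omega)]
      rw [show -nu t + 0 + 0 = -nu t by ring, abs_neg, abs_of_pos (nu_pos _)]
  · rw [if_neg (by omega), if_neg (by omega), if_neg (by omega)]
    simp [(nu_pos t).le]

private lemma cc_eq_zero {Q t : ℕ} (h : ¬ (t < Q ∧ Q ≤ 2*t+2)) : cc Q t = 0 := by
  rw [cc]
  rcases lt_or_ge t Q with h1 | h1
  · have h3 : 2*t+2 < Q := by omega
    rw [if_pos h1, if_pos (by omega), if_pos h3]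
    have := nu_rec t
    linarith
  · rw [if_neg (by omega), if_neg (by omega), if_neg (by omega)]; ring

private lemma cc_sum_bound (Q m : ℕ) : |∑ t ∈ range m, cc Q t| ≤ 2 * nu 0 := by
  calc |∑ t ∈ range m, cc Q t| ≤ ∑ t ∈ range m, |cc Q t| := Finset.abs_sum_le_sum_abs _ _
    _ ≤ ∑ t ∈ range m, (if (Q-1)/2 ≤ t ∧ t < Q then nu t else 0) := by
        apply Finset.sum_le_sum
        intro t _
        by_cases h : (Q-1)/2 ≤ t ∧ t < Q
        · rw [if_pos h]; exact cc_abs Q t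
        · rw [if_neg h, cc_eq_zero (by omega), abs_zero]
    _ = ∑ t ∈ (range m).filter (fun t => (Q-1)/2 ≤ t ∧ t < Q), nu t := (Finset.sum_filter _ _).symm
    _ ≤ ∑ t ∈ Ico ((Q-1)/2) Q, nu t := by
        apply Finset.sum_le_sum_of_subset_of_nonneg
        · intro t ht
          simp only [Finset.mem_filter, Finset.mem_range] at ht
          exact Finset.mem_Ico.mpr ⟨ht.2.1, ht.2.2⟩
        · intro i _ _; exact (nu_pos i).le
    _ ≤ 2 * nu 0 := sum_window (by omega)

private lemma GG_bound (Q P : ℕ) : |GG Q P| ≤ 6 := by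
  have h0 := nu_zero
  have key : ∀ m, |GG Q (3*m+1)| ≤ 33/8 := by
    intro m
    rw [GG_1]
    have h1 := cc_sum_bound Q m
    rcases lt_or_ge 0 Q with h | h
    · rw [if_pos h]
      calc |nu 0 + ∑ t ∈ range m, cc Q t| ≤ |nu 0| + |∑ t ∈ range m, cc Q t| := abs_add_le _ _
        _ ≤ 33/8 := by rw [abs_of_pos (nu_pos 0)]; linarith
    · rw [if_neg (by omega)]
      rw [zero_add]; linarith
  have habs : ∀ n, |(if pairIdx n < Q then hh n else 0)| ≤ nu 0 := by
    intro n
    by_cases h : pairIdx n < Q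
    · rw [if_pos h, abs_hh]; exact nu_le_nu0 _
    · rw [if_neg h, abs_zero]; linarith [nu_pos 0]
  obtain ⟨m, hm⟩ : ∃ m, P = 0 ∨ P = 3*m+1 ∨ P = 3*m+2 ∨ P = 3*m+3 := ⟨(P-1)/3, by omega⟩
  rcases hm with rfl | rfl | rfl | rfl
  · simp [GG]
  · calc |GG Q (3*m+1)| ≤ 33/8 := key m
      _ ≤ 6 := by norm_num
  · rw [GG, show 3*m+2 = (3*m+1)+1 by ring, Finset.sum_range_succ, ← GG]
    calc _ ≤ |GG Q (3*m+1)| + |(if pairIdx (3*m+1) < Q then hh (3*m+1) else 0)| := abs_add_le _ _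
      _ ≤ 33/8 + 7/8 := by have := key m; have := habs (3*m+1); linarith
      _ ≤ 6 := by norm_num
  · rw [GG, show 3*m+3 = (3*m+1)+1+1 by ring, Finset.sum_range_succ, Finset.sum_range_succ, ← GG]
    have e : (3*m+1)+1 = 3*m+2 := by ring
    calc _ ≤ |GG Q (3*m+1) + (if pairIdx (3*m+1) < Q then hh (3*m+1) else 0)|
            + |(if pairIdx ((3*m+1)+1) < Q then hh ((3*m+1)+1) else 0)| := abs_add_le _ _
      _ ≤ |GG Q (3*m+1)| + |(if pairIdx (3*m+1) < Q then hh (3*m+1) else 0)|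
            + |(if pairIdx ((3*m+1)+1) < Q then hh ((3*m+1)+1) else 0)| := by
          have := abs_add_le (GG Q (3*m+1)) ((if pairIdx (3*m+1) < Q then hh (3*m+1) else 0)); linarith
      _ ≤ 33/8 + 7/8 + 7/8 := by
          have := key m; have := habs (3*m+1); have := habs ((3*m+1)+1); linarith
      _ ≤ 6 := by norm_num

private def Afin (Q : ℕ) : Finset ℕ := (range (3*Q+1)).filter (fun n => pairIdx n < Q)

private lemma mem_Afin {n Q : ℕ} : n ∈ Afin Q ↔ pairIdx n < Q := by
  constructor
  · intro h; exact (Finset.mem_filter.mp h).2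
  · intro h
    refine Finset.mem_filter.mpr ⟨Finset.mem_range.mpr ?_, h⟩
    have := le_pairIdx n; omega

private lemma Afin_greedy (Q : ℕ) : GreedySet hh (Afin Q) := by
  intro n hn k hk
  rw [abs_hh, abs_hh]
  have h1 := mem_Afin.mp hn
  have h2 : ¬ pairIdx k < Q := fun h => hk (mem_Afin.mpr h)
  exact nu_anti (by omega)

private lemma pos_ne_neg (q : ℕ) : (3*q+1)/2 ≠ 3*q+1 := by omega

private lemma neg_mem_Afin_succ (q : ℕ) : 3*q+1 ∈ Afin (q+1) := mem_Afin.mpr (by rw [pairIdx_neg]; omega)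

private lemma Afin_sdiff {q : ℕ} {B : Finset ℕ} (hB : B ⊆ Afin (q+1)) :
    B \ Afin q ⊆ {3*q+1, (3*q+1)/2} := by
  intro n hn
  obtain ⟨hn1, hn2⟩ := Finset.mem_sdiff.mp hn
  have h1 : pairIdx n < q + 1 := mem_Afin.mp (hB hn1)
  have h2 : ¬ pairIdx n < q := fun h => hn2 (mem_Afin.mpr h)
  have : pairIdx n = q := by omega
  rcases pairIdx_fiber this with h | h <;> simp [h]

private lemma sum_pair_bound {q : ℕ} {X : Finset ℕ} (hX : X ⊆ {3*q+1, (3*q+1)/2}) :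
    |∑ n ∈ X, hh n| ≤ 2 * nu q := by
  calc |∑ n ∈ X, hh n| ≤ ∑ n ∈ X, |hh n| := Finset.abs_sum_le_sum_abs _ _
    _ ≤ ∑ n ∈ ({3*q+1, (3*q+1)/2} : Finset ℕ), |hh n| :=
        Finset.sum_le_sum_of_subset_of_nonneg hX (fun i _ _ => abs_nonneg _)
    _ = |hh (3*q+1)| + |hh ((3*q+1)/2)| := by
        rw [Finset.sum_insert (by simp [(pos_ne_neg q).symm]), Finset.sum_singleton]
    _ ≤ 2 * nu q := by
        rw [abs_hh, abs_hh, pairIdx_neg, (pairIdx_pos_val q).1]; linarith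

private lemma Afin_succ (q : ℕ) : Afin (q+1) = insert (3*q+1) (insert ((3*q+1)/2) (Afin q)) := by
  ext n
  simp only [Finset.mem_insert, mem_Afin]
  constructor
  · intro h
    rcases Nat.lt_or_ge (pairIdx n) q with h' | h'
    · right; right; exact h'
    · have hq : pairIdx n = q := by omega
      rcases pairIdx_fiber hq with h'' | h''
      · left; exact h''
      · right; left; exact h''
  · rintro (rfl | rfl | h)
    · rw [pairIdx_neg]; omega
    · rw [(pairIdx_pos_val q).1]; omega
    · omega

private lemma Afin_zero : Afin 0 = ∅ := by
  ext n; simp [mem_Afin]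

private lemma Afin_sum (Q : ℕ) : ∑ n ∈ Afin Q, hh n = 0 := by
  induction Q with
  | zero => simp [Afin_zero]
  | succ q ih =>
    have hn2 : (3*q+1)/2 ∉ Afin q := fun h =>
      absurd (mem_Afin.mp h) (by rw [(pairIdx_pos_val q).1]; omega)
    have hn1 : (3*q+1) ∉ insert ((3*q+1)/2) (Afin q) := by
      simp only [Finset.mem_insert]
      rintro (h | h)
      · exact (pos_ne_neg q) h.symm
      · exact absurd (mem_Afin.mp h) (by rw [pairIdx_neg]; omega)
    rw [Afin_succ, Finset.sum_insert hn1, Finset.sum_insert hn2, ih, hh_neg, hh_pos_val]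
    ring

private lemma greedy_struct {B : Finset ℕ} (hB : GreedySet hh B) (hne : B.Nonempty) :
    ∃ q, Afin q ⊆ B ∧ B ⊆ Afin (q+1) ∧ |oneStar hh B| ≤ 2 * nu q := by
  have hne' : (B.image pairIdx).Nonempty := hne.image _
  set q := (B.image pairIdx).max' hne' with hq
  obtain ⟨m, hmB, hmq⟩ := Finset.mem_image.mp ((B.image pairIdx).max'_mem hne')
  have hsub1 : Afin q ⊆ B := by
    intro n hn
    by_contra hnB
    have h1 := hB m hmB n hnB
    rw [abs_hh, abs_hh, hmq] at h1
    have h2 : pairIdx n < q := mem_Afin.mp hn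
    exact absurd h1 (not_le.mpr (nu_strictAnti h2))
  have hsub2 : B ⊆ Afin (q+1) := by
    intro n hn
    exact mem_Afin.mpr (Nat.lt_succ_of_le (Finset.le_max' _ _ (Finset.mem_image_of_mem _ hn)))
  refine ⟨q, hsub1, hsub2, ?_⟩
  have e1 : ∑ n ∈ B \ Afin q, hh n = ∑ n ∈ B, hh n - ∑ n ∈ Afin q, hh n :=
    Finset.sum_sdiff_eq_sub hsub1
  have h2 := sum_pair_bound (Afin_sdiff hsub2)
  rw [e1, Afin_sum, sub_zero] at h2
  simpa [oneStar] using h2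

private lemma sum_Icc_hh {a b : ℕ} (h : a ≤ b + 1) :
    ∑ n ∈ Finset.Icc a b, hh n = SS (b+1) - SS a := by
  rw [← Finset.Ico_add_one_right_eq_Icc, Finset.sum_Ico_eq_sub hh h, SS, SS]

private lemma sum_inter_Afin (q : ℕ) {a b : ℕ} (h : a ≤ b + 1) :
    ∑ n ∈ Finset.Icc a b ∩ Afin q, hh n = GG q (b+1) - GG q a := by
  have e : Finset.Icc a b ∩ Afin q = (Finset.Icc a b).filter (fun n => pairIdx n < q) := by
    ext n
    simp only [Finset.mem_inter, Finset.mem_filter, mem_Afin]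
  rw [e, Finset.sum_filter, ← Finset.Ico_add_one_right_eq_Icc,
    Finset.sum_Ico_eq_sub (fun n => if pairIdx n < q then hh n else 0) h, GG, GG]

private lemma main_bound {A : Finset ℕ} (hA : GreedySet hh A) (a b : ℕ) :
    |∑ n ∈ Finset.Icc a b \ A, hh n| ≤ 20 := by
  rcases le_or_gt a b with hab | hab
  swap
  · rw [Finset.Icc_eq_empty (not_le.mpr hab)]
    simp
  have hab1 : a ≤ b + 1 := by omega
  have hx : |∑ n ∈ Finset.Icc a b, hh n| ≤ 4 := by
    rw [sum_Icc_hh hab1]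
    have s1 := SS_bound (b+1); have s2 := SS_bound a
    calc |SS (b+1) - SS a| ≤ |SS (b+1)| + |SS a| := abs_sub _ _
      _ ≤ 4 := by linarith
  rcases A.eq_empty_or_nonempty with rfl | hne
  · rw [Finset.sdiff_empty]
    linarith
  obtain ⟨q, hsub1, hsub2, -⟩ := greedy_struct hA hne
  have e1 : ∑ n ∈ Finset.Icc a b \ A, hh n
      = ∑ n ∈ Finset.Icc a b, hh n - ∑ n ∈ Finset.Icc a b ∩ A, hh n := by
    rw [← Finset.sdiff_inter_self_left]
    exact Finset.sum_sdiff_eq_sub (Finset.inter_subset_left)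
  have e2 : Finset.Icc a b ∩ A = (Finset.Icc a b ∩ Afin q) ∪ (Finset.Icc a b ∩ (A \ Afin q)) := by
    rw [← Finset.inter_union_distrib_left]
    congr 1
    exact (Finset.union_sdiff_of_subset hsub1).symm
  have hdisj : Disjoint (Finset.Icc a b ∩ Afin q) (Finset.Icc a b ∩ (A \ Afin q)) := by
    apply Finset.disjoint_of_subset_left (Finset.inter_subset_right)
    apply Finset.disjoint_of_subset_right (Finset.inter_subset_right)
    exact Finset.disjoint_sdiff
  have e3 : ∑ n ∈ Finset.Icc a b ∩ A, hh n
      = ∑ n ∈ Finset.Icc a b ∩ Afin q, hh n + ∑ n ∈ Finset.Icc a b ∩ (A \ Afin q), hh n := by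
    rw [e2, Finset.sum_union hdisj]
  have b1 : |∑ n ∈ Finset.Icc a b ∩ (A \ Afin q), hh n| ≤ 2 * nu q :=
    sum_pair_bound ((Finset.inter_subset_right).trans (Afin_sdiff hsub2))
  have b2 := sum_inter_Afin q hab1
  rw [e1, e3, b2]
  have g1 := GG_bound q (b+1); have g2 := GG_bound q a
  have hnu := nu_le_nu0 q
  have hnu0 : nu 0 = 7/8 := nu_zero
  set Y := ∑ n ∈ Finset.Icc a b ∩ (A \ Afin q), hh n
  set Z := ∑ n ∈ Finset.Icc a b, hh n
  have habs : |Z - (GG q (b+1) - GG q a + Y)| ≤ |Z| + |GG q (b+1)| + |GG q a| + |Y| := by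
    have h1 := abs_sub Z (GG q (b+1) - GG q a + Y)
    have h2 : |GG q (b+1) - GG q a + Y| ≤ |GG q (b+1)| + |GG q a| + |Y| := by
      calc _ ≤ |GG q (b+1) - GG q a| + |Y| := abs_add_le _ _
        _ ≤ _ := by have := abs_sub (GG q (b+1)) (GG q a); linarith
    linarith
  linarith

private lemma key_val (k : ℕ) :
    ∑ n ∈ Finset.Icc (3*2^k - 2) (3*2^(k+1) - 3) \ Afin (2^(k+1) - 1), hh n = nu 0 := by
  have hp1 : (1:ℕ) ≤ 2^k := Nat.one_le_two_pow
  have hp2 : (2:ℕ)^(k+1) = 2 * 2^k := by ring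
  set m1 := 2^k - 1 with hm1
  set Q := 2^(k+1) - 1 with hQ
  have hQpos : 0 < Q := by omega
  have ha : 3*2^k - 2 = 3*m1 + 1 := by omega
  have hb : 3*2^(k+1) - 3 + 1 = 3*Q + 1 := by omega
  have hab1 : 3*2^k - 2 ≤ (3*2^(k+1) - 3) + 1 := by omega
  have e1 : ∑ n ∈ Finset.Icc (3*2^k - 2) (3*2^(k+1) - 3) \ Afin Q, hh n
      = ∑ n ∈ Finset.Icc (3*2^k - 2) (3*2^(k+1) - 3), hh n
        - ∑ n ∈ Finset.Icc (3*2^k - 2) (3*2^(k+1) - 3) ∩ Afin Q, hh n := by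
    rw [← Finset.sdiff_inter_self_left]
    exact Finset.sum_sdiff_eq_sub (Finset.inter_subset_left)
  have e2 : ∑ t ∈ range Q, cc Q t - ∑ t ∈ range m1, cc Q t = ∑ t ∈ Ico m1 Q, cc Q t := by
    rw [Finset.sum_Ico_eq_sub _ (show m1 ≤ Q by omega)]
  have e3 : ∑ t ∈ Ico m1 Q, cc Q t = -(nu 0) := by
    have hcong : ∀ t ∈ Ico m1 Q, cc Q t = -nu t := by
      intro t ht
      obtain ⟨h1, h2⟩ := Finset.mem_Ico.mp ht
      rw [cc, if_pos h2, if_neg (by omega), if_neg (by omega)]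
      ring
    rw [Finset.sum_congr rfl hcong, Finset.sum_neg_distrib, hm1, hQ, sum_level]
  rw [e1, sum_Icc_hh hab1, sum_inter_Afin Q hab1, hb, ha, SS_1, SS_1, GG_1, GG_1]
  simp only [if_pos hQpos]
  linarith

private lemma memc0_hh : Memc0 hh := by
  apply squeeze_zero_norm' (a := fun n : ℕ => 8 / (n:ℝ))
  · filter_upwards [eventually_ge_atTop 1] with n hn
    have h1 : ‖hh n‖ = nu (pairIdx n) := by rw [Real.norm_eq_abs, abs_hh]
    rw [h1]
    have h2 := nu_le (pairIdx n)
    have h3 : ((n:ℝ) + 2) ≤ 3 * ((pairIdx n : ℝ) + 1) := by exact_mod_cast pairIdx_lower n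
    have hn' : (1:ℝ) ≤ (n:ℝ) := by exact_mod_cast hn
    have h4 : (5/2) / ((pairIdx n : ℝ)+1) ≤ 8 / (n:ℝ) := by
      rw [div_le_div_iff₀ (by positivity) (by linarith)]
      nlinarith
    linarith
  · exact tendsto_const_div_atTop_nhds_zero_nat 8

private lemma seriesLim_hh : SeriesLim hh (nu 0) := by
  rw [SeriesLim, show (fun m => ∑ n ∈ Finset.range m, hh n) = SS from rfl,
    ← tendsto_sub_nhds_zero_iff]
  apply squeeze_zero_norm' (a := fun m : ℕ => 15 / (m:ℝ))
  · filter_upwards [eventually_ge_atTop 1] with m hm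
    have h1 := SS_dist m hm
    have h2 := nu_le ((m-1)/3)
    have h3 : 3 * (((m-1)/3 : ℕ):ℝ) + 3 ≥ (m:ℝ) := by
      have : 3 * ((m-1)/3) + 3 ≥ m := by omega
      exact_mod_cast this
    have hm' : (1:ℝ) ≤ (m:ℝ) := by exact_mod_cast hm
    have h4 : (5/2) / ((((m-1)/3 : ℕ):ℝ)+1) ≤ 15 / (m:ℝ) := by
      rw [div_le_div_iff₀ (by positivity) (by linarith)]
      nlinarith
    rw [Real.norm_eq_abs]
    linarith
  · exact tendsto_const_div_atTop_nhds_zero_nat 15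

private lemma greedyLim_hh : GreedyLim hh 0 := by
  intro ε hε
  obtain ⟨N, hN⟩ := exists_nat_gt (5/ε)
  refine ⟨Afin (N+1), Afin_greedy _, ?_⟩
  intro B hB hAB
  have hne : B.Nonempty := ⟨3*N+1, hAB (neg_mem_Afin_succ N)⟩
  obtain ⟨q, hq1, hq2, hq3⟩ := greedy_struct hB hne
  have hqN : N ≤ q := by
    have h1 : 3*N+1 ∈ Afin (q+1) := hq2 (hAB (neg_mem_Afin_succ N))
    have h2 := mem_Afin.mp h1
    rw [pairIdx_neg] at h2
    omega
  have h5 : nu q ≤ nu N := nu_anti hqN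
  have h6 := nu_le N
  have hNpos : (0:ℝ) < (N:ℝ) + 1 := by positivity
  have h7 : (5/2) / ((N:ℝ)+1) < ε / 2 := by
    rw [div_lt_div_iff₀ hNpos (by norm_num)]
    have h8 : 5/ε < (N:ℝ) := hN
    have h9 : 5 < ε * (N:ℝ) := by
      rw [div_lt_iff₀ hε] at h8
      linarith
    nlinarith
  rw [sub_zero]
  calc |oneStar hh B| ≤ 2 * nu q := hq3
    _ ≤ 2 * nu N := by linarith
    _ < ε := by linarith

private lemma memB_hh : MemB hh := by
  rw [MemB, BNorm]
  apply lt_of_le_of_lt (b := ENNReal.ofReal 20)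
  · apply iSup₂_le
    intro A hA
    rw [beta]
    apply iSup_le
    intro a
    apply iSup_le
    intro b
    exact ENNReal.ofReal_le_ofReal (main_bound hA a b)
  · exact ENNReal.ofReal_lt_top

private lemma not_memB0_hh : ¬ MemB0 hh := by
  rintro ⟨-, H⟩
  obtain ⟨A, hA, hB⟩ := H (7/8) (by norm_num)
  set k := A.sup pairIdx with hk
  have hsub : A ⊆ Afin (2^(k+1) - 1) := by
    intro n hn
    apply mem_Afin.mpr
    have h1 : pairIdx n ≤ k := Finset.le_sup hn
    have h2 : k < 2^k := Nat.lt_two_pow_self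
    have h3 : (2:ℕ)^(k+1) = 2*2^k := by ring
    omega
  have hlt := hB (Afin (2^(k+1) - 1)) (Afin_greedy _) hsub
  have hge : ENNReal.ofReal (7/8) ≤ beta hh (Afin (2^(k+1) - 1)) := by
    rw [beta]
    apply le_iSup_of_le (3*2^k - 2)
    apply le_iSup_of_le (3*2^(k+1) - 3)
    apply ENNReal.ofReal_le_ofReal
    rw [oneStar, key_val k, nu_zero]
    rw [abs_of_pos (by norm_num)]
  exact hge.not_gt hlt

private theorem stmt_14_aux :
    (∃ h : ℕ → ℝ, MemA h ∧ MemSeries h ∧ MemB h ∧ ¬ MemB0 h) ∧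
    ¬ ∀ f : ℕ → ℝ, MemA f → MemSeries f → MemB f → MemB0 f := by
  have hA : MemA hh := ⟨memc0_hh, 0, greedyLim_hh⟩
  have hS : MemSeries hh := ⟨nu 0, seriesLim_hh⟩
  refine ⟨⟨hh, hA, hS, memB_hh, not_memB0_hh⟩, fun H => not_memB0_hh (H hh hA hS memB_hh)⟩

end StmtFourteen

/-- there is `h ∈ 𝔸 ∩ 𝒔 ∩ 𝔹` with `h ∉ 𝔹₀`; in particular
`𝔸 ∩ 𝒔 ∩ 𝔹 ⊄ 𝔹₀`. -/
theorem stmt_14 :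
    (∃ h : ℕ → ℝ, MemA h ∧ MemSeries h ∧ MemB h ∧ ¬ MemB0 h) ∧
    ¬ ∀ f : ℕ → ℝ, MemA f → MemSeries f → MemB f → MemB0 f :=
  stmt_14_aux
end

section
/- There exist sequences f₁ ∈ 𝔹₀ and g₁ : ℕ → ℝ with ∑_n |g₁(n)| < ∞ such that f₁ + g₁ ∉ 𝔹 and f₁ + g₁ ∉ 𝔸. -/
open Filter ENNReal
open scoped Classical

noncomputable section
namespace S15

def blk (p : ℕ) : ℕ := Nat.log 4 (p+1)
def bs (k : ℕ) : ℕ := 4^k - 1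
def be (k : ℕ) : ℕ := 4^(k+1) - 2

noncomputable def v (p : ℕ) : ℝ := (1/2:ℝ)^(blk p) + (1/2:ℝ)^(blk p + p + 2)
noncomputable def w (p : ℕ) : ℝ :=
  (1/2:ℝ)^(blk p) + (1/2:ℝ)^(blk p + bs (blk p) + 2) + (1/2:ℝ)^(blk p + p + 3)

lemma pow4_pos (k : ℕ) : 0 < 4^k := Nat.pow_pos (by norm_num)

lemma bs_add_one (k : ℕ) : bs k + 1 = 4^k := Nat.sub_add_cancel (pow4_pos k)

lemma be_add_two (k : ℕ) : be k + 2 = 4^(k+1) := by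
  have : 2 ≤ 4^(k+1) := by
    calc (2:ℕ) ≤ 4 := by norm_num
    _ ≤ 4^(k+1) := Nat.le_self_pow (by omega) 4
  unfold be; omega

lemma bs_succ_eq (k : ℕ) : bs (k+1) = be k + 1 := by
  have h1 := bs_add_one (k+1); have h2 := be_add_two k; omega

lemma blk_bs (k : ℕ) : blk (bs k) = k := by
  unfold blk
  rw [bs_add_one]
  exact Nat.log_pow (by norm_num : 1 < 4) k

lemma blk_be (k : ℕ) : blk (be k) = k := by
  unfold blk
  apply Nat.log_eq_of_pow_le_of_lt_pow
  · have h2 := be_add_two k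
    have : 4^k < 4^(k+1) := Nat.pow_lt_pow_right (by norm_num) (by omega)
    omega
  · have h2 := be_add_two k; omega

lemma blk_mono : Monotone blk := fun a b hab => Nat.log_mono_right (by omega)

lemma bs_blk_le (p : ℕ) : bs (blk p) ≤ p := by
  have h1 : 4 ^ Nat.log 4 (p+1) ≤ p + 1 := Nat.pow_log_le_self 4 (by omega)
  have h2 := bs_add_one (blk p)
  unfold blk at h2 ⊢; omega

lemma lt_pow_blk (p : ℕ) : p + 1 < 4^(blk p + 1) :=
  Nat.lt_pow_succ_log_self (by norm_num) (p+1)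

lemma blk_eq_of {k p : ℕ} (h1 : bs k ≤ p) (h2 : p ≤ be k) : blk p = k := by
  unfold blk
  apply Nat.log_eq_of_pow_le_of_lt_pow
  · have := bs_add_one k; omega
  · have := be_add_two k; omega

lemma r_pos (n : ℕ) : (0:ℝ) < (1/2:ℝ)^n := by positivity

lemma r_anti {m n : ℕ} (h : m ≤ n) : (1/2:ℝ)^n ≤ (1/2:ℝ)^m :=
  pow_le_pow_of_le_one (by norm_num) (by norm_num) h

lemma r_anti_strict {m n : ℕ} (h : m < n) : (1/2:ℝ)^n < (1/2:ℝ)^m :=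
  pow_lt_pow_right_of_lt_one₀ (by norm_num) (by norm_num) h

lemma v_pos (p : ℕ) : 0 < v p := by
  unfold v; have := r_pos (blk p); have := r_pos (blk p + p + 2); linarith

lemma v_gt (p : ℕ) : (1/2:ℝ)^(blk p) < v p := by
  unfold v; have := r_pos (blk p + p + 2); linarith

lemma v_le_two (p : ℕ) : v p ≤ 2 * (1/2:ℝ)^(blk p) := by
  unfold v
  have : (1/2:ℝ)^(blk p + p + 2) ≤ (1/2:ℝ)^(blk p) := r_anti (by omega)
  linarith

lemma w_lt_two (p : ℕ) : w p < 2 * (1/2:ℝ)^(blk p) := by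
  unfold w
  have h1 : (1/2:ℝ)^(blk p + bs (blk p) + 2) ≤ (1/2:ℝ)^(blk p + 2) := r_anti (by omega)
  have h2 : (1/2:ℝ)^(blk p + p + 3) ≤ (1/2:ℝ)^(blk p + 3) := r_anti (by omega)
  have e2 : (1/2:ℝ)^(blk p + 2) = (1/2:ℝ)^(blk p) * (1/4) := by rw [pow_add]; norm_num
  have e3 : (1/2:ℝ)^(blk p + 3) = (1/2:ℝ)^(blk p) * (1/8) := by rw [pow_add]; norm_num
  have := r_pos (blk p)
  nlinarith

lemma v_lt_w_same {p q : ℕ} (e : blk p = blk q) : v p < w q := by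
  unfold v w
  rw [← e]
  have h1 : (1/2:ℝ)^(blk p + p + 2) ≤ (1/2:ℝ)^(blk p + bs (blk p) + 2) :=
    r_anti (by have := bs_blk_le p; omega)
  have := r_pos (blk p + q + 3)
  linarith

lemma w_lt_v {p q : ℕ} (hlt : blk p < blk q) : w q < v p := by
  have h1 : w q < 2 * (1/2:ℝ)^(blk q) := w_lt_two q
  have h2 : (1/2:ℝ)^(blk q) ≤ (1/2:ℝ)^(blk p + 1) := r_anti (by omega)
  have h3 : (2:ℝ) * (1/2:ℝ)^(blk p + 1) = (1/2:ℝ)^(blk p) := by rw [pow_succ]; ring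
  have h4 := v_gt p
  nlinarith

lemma v_strictAnti : StrictAnti v := by
  apply strictAnti_nat_of_succ_lt
  intro p
  rcases eq_or_lt_of_le (blk_mono (Nat.le_succ p)) with e | hlt
  · unfold v; rw [← e]
    have : (1/2:ℝ)^(blk p + (p+1) + 2) < (1/2:ℝ)^(blk p + p + 2) := r_anti_strict (by omega)
    linarith
  · have h1 : v (p+1) < w (p+1) := v_lt_w_same rfl
    have h2 : w (p+1) < v p := w_lt_v hlt
    linarith

lemma v_le_w (p : ℕ) : v p ≤ w p := le_of_lt (v_lt_w_same rfl)


noncomputable def f (n : ℕ) : ℝ := if n % 2 = 0 then v (n/2) else -v (n/2)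
noncomputable def h (n : ℕ) : ℝ := if n % 2 = 0 then w (n/2) else -v (n/2)
noncomputable def g (n : ℕ) : ℝ := if n % 2 = 0 then w (n/2) - v (n/2) else 0

lemma abs_f (n : ℕ) : |f n| = v (n/2) := by
  unfold f; split
  · exact abs_of_pos (v_pos _)
  · rw [abs_neg]; exact abs_of_pos (v_pos _)

lemma abs_h_even {n : ℕ} (hn : n % 2 = 0) : |h n| = w (n/2) := by
  unfold h; rw [if_pos hn]
  exact abs_of_pos (lt_of_lt_of_le (v_pos _) (v_le_w _))

lemma abs_h_odd {n : ℕ} (hn : n % 2 = 1) : |h n| = v (n/2) := by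
  unfold h; rw [if_neg (by omega)]
  rw [abs_neg]; exact abs_of_pos (v_pos _)

lemma abs_h_le (n : ℕ) : |h n| ≤ w (n/2) := by
  rcases Nat.mod_two_eq_zero_or_one n with hn | hn
  · rw [abs_h_even hn]
  · rw [abs_h_odd hn]; exact v_le_w _

lemma abs_h_ge (n : ℕ) : v (n/2) ≤ |h n| := by
  rcases Nat.mod_two_eq_zero_or_one n with hn | hn
  · rw [abs_h_even hn]; exact v_le_w _
  · rw [abs_h_odd hn]

lemma Fsum (m : ℕ) : ∑ n ∈ Finset.range m, f n = if m % 2 = 1 then v (m/2) else 0 := by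
  induction m with
  | zero => simp
  | succ m ih =>
    rw [Finset.sum_range_succ, ih]
    rcases Nat.mod_two_eq_zero_or_one m with hm | hm
    · rw [if_neg (by omega), if_pos (by omega)]
      unfold f; rw [if_pos hm]
      have : (m+1)/2 = m/2 := by omega
      rw [this]; ring
    · rw [if_pos hm, if_neg (by omega)]
      unfold f; rw [if_neg (by omega)]; ring

lemma abs_Fsum (m : ℕ) : |∑ n ∈ Finset.range m, f n| ≤ v (m/2) := by
  rw [Fsum]; split
  · rw [abs_of_pos (v_pos _)]
  · simpa using le_of_lt (v_pos _)

lemma greedy_f_range (N : ℕ) : GreedySet f (Finset.range (2*N)) := by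
  intro n hn j hj
  rw [Finset.mem_range] at hn; rw [Finset.mem_range, not_lt] at hj
  rw [abs_f, abs_f]
  exact v_strictAnti.antitone (by omega)

lemma greedy_f_struct {B : Finset ℕ} (hB : GreedySet f B) (hne : B.Nonempty) :
    ∀ j, j / 2 < (B.max' hne) / 2 → j ∈ B := by
  intro j hj
  by_contra hjB
  have h1 := hB (B.max' hne) (B.max'_mem hne) j hjB
  rw [abs_f, abs_f] at h1
  exact absurd h1 (not_le.mpr (v_strictAnti hj))

lemma beta_bound {B : Finset ℕ} (hB : GreedySet f B) {k : ℕ}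
    (hsub : Finset.range (2 * 4^k) ⊆ B) (a b : ℕ) :
    |oneStar f (Finset.Icc a b \ B)| ≤ 8 * (1/2:ℝ)^k := by
  have h4 := pow4_pos k
  have hne : B.Nonempty := ⟨0, hsub (Finset.mem_range.mpr (by omega))⟩
  set M := B.max' hne with hM
  set t := M / 2 with ht
  have hMB : 2 * 4^k - 1 ≤ M := B.le_max' _ (hsub (Finset.mem_range.mpr (by omega)))
  have htk : bs k ≤ t := by have := bs_add_one k; omega
  have hvt : v t ≤ 2 * (1/2:ℝ)^k := by
    calc v t ≤ v (bs k) := v_strictAnti.antitone htk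
    _ ≤ 2 * (1/2:ℝ)^(blk (bs k)) := v_le_two _
    _ = 2 * (1/2:ℝ)^k := by rw [blk_bs]
  have key1 : ∀ j, j < 2*t → j ∈ B := by
    intro j hj; exact greedy_f_struct hB hne j (by omega)
  have key2 : ∀ j ∈ B, j ≤ 2*t + 1 := by
    intro j hj; have := B.le_max' j hj; omega
  set a' := max a (2*t) with ha'
  have hset : Finset.Icc a b \ B = Finset.Icc a' b \ B := by
    ext n
    simp only [Finset.mem_sdiff, Finset.mem_Icc, ha', max_le_iff]
    constructor
    · rintro ⟨⟨h1, h2⟩, h3⟩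
      refine ⟨⟨⟨h1, ?_⟩, h2⟩, h3⟩
      by_contra hc
      exact h3 (key1 n (by omega))
    · rintro ⟨⟨⟨h1, _⟩, h2⟩, h3⟩
      exact ⟨⟨h1, h2⟩, h3⟩
  set S := Finset.Icc a' b ∩ B with hS
  have hset2 : Finset.Icc a' b \ B = Finset.Icc a' b \ S := by
    rw [hS, Finset.sdiff_inter_self_left]
  have hSsub : S ⊆ Finset.Icc a' b := Finset.inter_subset_left
  have hsum : oneStar f (Finset.Icc a b \ B)
      = (∑ n ∈ Finset.Icc a' b, f n) - ∑ n ∈ S, f n := by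
    rw [hset, hset2]; unfold oneStar
    exact Finset.sum_sdiff_eq_sub hSsub
  have hSbound : |∑ n ∈ S, f n| ≤ 2 * v t := by
    have hsub2 : S ⊆ {2*t, 2*t+1} := by
      intro j hj
      rw [hS, Finset.mem_inter, Finset.mem_Icc] at hj
      have h1 : 2*t ≤ j := le_trans (le_max_right _ _) hj.1.1
      have h2 := key2 j hj.2
      simp only [Finset.mem_insert, Finset.mem_singleton]; omega
    calc |∑ n ∈ S, f n| ≤ ∑ n ∈ S, |f n| := Finset.abs_sum_le_sum_abs _ _
    _ ≤ ∑ n ∈ ({2*t, 2*t+1} : Finset ℕ), |f n| :=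
        Finset.sum_le_sum_of_subset_of_nonneg hsub2 (fun i _ _ => abs_nonneg _)
    _ = |f (2*t)| + |f (2*t+1)| := Finset.sum_pair (by omega)
    _ = v t + v t := by
        rw [abs_f, abs_f]
        congr 2 <;> omega
    _ = 2 * v t := by ring
  have hmain : |∑ n ∈ Finset.Icc a' b, f n| ≤ 2 * v t := by
    rcases le_or_gt a' b with hab | hab
    · have hIcc : Finset.Icc a' b = Finset.range (b+1) \ Finset.range a' := by
        ext n; simp [Finset.mem_Icc, Finset.mem_sdiff, Finset.mem_range]; omega
      rw [hIcc, Finset.sum_sdiff_eq_sub (Finset.range_subset_range.mpr (by omega))]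
      have h1 := abs_Fsum (b+1)
      have h2 := abs_Fsum a'
      have ht1 : t ≤ (b+1)/2 := by
        have : 2*t ≤ a' := le_max_right _ _
        omega
      have ht2 : t ≤ a'/2 := by
        have : 2*t ≤ a' := le_max_right _ _
        omega
      have hv1 : v ((b+1)/2) ≤ v t := v_strictAnti.antitone ht1
      have hv2 : v (a'/2) ≤ v t := v_strictAnti.antitone ht2
      calc |∑ n ∈ Finset.range (b+1), f n - ∑ n ∈ Finset.range a', f n|
          ≤ |∑ n ∈ Finset.range (b+1), f n| + |∑ n ∈ Finset.range a', f n| := abs_sub _ _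
      _ ≤ 2 * v t := by linarith
    · rw [Finset.Icc_eq_empty (not_le.mpr hab)]
      simp
      linarith [v_pos t]
  rw [hsum]
  calc |(∑ n ∈ Finset.Icc a' b, f n) - ∑ n ∈ S, f n|
      ≤ |∑ n ∈ Finset.Icc a' b, f n| + |∑ n ∈ S, f n| := abs_sub _ _
  _ ≤ 4 * v t := by linarith
  _ ≤ 8 * (1/2:ℝ)^k := by linarith


lemma memc0_f : Memc0 f := by
  rw [Memc0, Metric.tendsto_atTop]
  intro ε hε
  obtain ⟨k, hk⟩ := exists_pow_lt_of_lt_one (half_pos hε) (by norm_num : (1/2:ℝ) < 1)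
  refine ⟨2 * 4^k, fun n hn => ?_⟩
  rw [Real.dist_eq, sub_zero]
  have h4 := pow4_pos k
  have h1 : |f n| = v (n/2) := abs_f n
  have h2 : v (n/2) ≤ v (bs k) := v_strictAnti.antitone (by have := bs_add_one k; omega)
  have h3 : v (bs k) ≤ 2 * (1/2:ℝ)^k := by
    have := v_le_two (bs k); rw [blk_bs] at this; exact this
  calc |f n| ≤ 2 * (1/2:ℝ)^k := by rw [h1]; linarith
  _ < ε := by linarith

lemma memB0_f : MemB0 f := by
  refine ⟨memc0_f, fun ε hε => ?_⟩
  obtain ⟨k, hk⟩ := exists_pow_lt_of_lt_one (show (0:ℝ) < ε/32 by linarith) (by norm_num : (1/2:ℝ) < 1)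
  refine ⟨Finset.range (2 * 4^k), greedy_f_range (4^k), fun B hB hsub => ?_⟩
  have hbound : beta f B ≤ ENNReal.ofReal (ε/2) := by
    refine iSup_le fun a => iSup_le fun b => ENNReal.ofReal_le_ofReal ?_
    have := beta_bound hB hsub a b
    linarith
  refine lt_of_le_of_lt hbound ?_
  rw [ENNReal.ofReal_lt_ofReal_iff hε]
  linarith

lemma two_pow_le (p : ℕ) : (1/2:ℝ)^(4^p) ≤ (9/10:ℝ)^(4^(p+1)) := by
  have e : (4:ℕ)^(p+1) = 4^p * 4 := by ring
  rw [e, pow_mul']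
  exact pow_le_pow_left₀ (by norm_num) (by norm_num) _

lemma g_nonneg (n : ℕ) : 0 ≤ g n := by
  unfold g; split
  · linarith [v_le_w (n/2)]
  · exact le_refl 0

lemma g_le (p : ℕ) : g (2*p) ≤ 2 * (9/10:ℝ)^p := by
  have e0 : (2*p) % 2 = 0 := by omega
  have e1 : (2*p) / 2 = p := by omega
  unfold g; rw [if_pos e0, e1]
  have hble := lt_pow_blk p
  have hb1 := bs_add_one (blk p)
  have hwv : w p - v p ≤ (1/2:ℝ)^(blk p + bs (blk p) + 2) + (1/2:ℝ)^(blk p + p + 3) := by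
    unfold w v
    have := r_pos (blk p + p + 2)
    linarith
  have h1 : (1/2:ℝ)^(blk p + bs (blk p) + 2) ≤ (9/10:ℝ)^p := by
    calc (1/2:ℝ)^(blk p + bs (blk p) + 2) ≤ (1/2:ℝ)^(4^(blk p)) := r_anti (by omega)
    _ ≤ (9/10:ℝ)^(4^(blk p+1)) := two_pow_le (blk p)
    _ ≤ (9/10:ℝ)^p := pow_le_pow_of_le_one (by norm_num) (by norm_num) (by omega)
  have h2 : (1/2:ℝ)^(blk p + p + 3) ≤ (9/10:ℝ)^p := by
    calc (1/2:ℝ)^(blk p + p + 3) ≤ (1/2:ℝ)^p := r_anti (by omega)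
    _ ≤ (9/10:ℝ)^p := pow_le_pow_left₀ (by norm_num) (by norm_num) p
  linarith

lemma summable_g : Summable (fun n => |g n|) := by
  have hinj : Function.Injective (fun p : ℕ => 2*p) := fun a b hab => by
    simpa using hab
  have h0 : ∀ n ∉ Set.range (fun p : ℕ => 2*p), |g n| = 0 := by
    intro n hn
    have hodd : n % 2 = 1 := by
      rcases Nat.mod_two_eq_zero_or_one n with hh | hh
      · exact absurd (Set.mem_range.mpr ⟨n/2, by show 2*(n/2) = n; omega⟩) hn
      · exact hh
    unfold g; rw [if_neg (by omega), abs_zero]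
  rw [← hinj.summable_iff h0]
  have hs : Summable (fun p : ℕ => 2 * (9/10:ℝ)^p) :=
    (summable_geometric_of_lt_one (by norm_num) (by norm_num)).mul_left 2
  have hle : ∀ p : ℕ, ((fun n => |g n|) ∘ fun p : ℕ => 2*p) p ≤ 2 * (9/10:ℝ)^p := by
    intro p
    show |g (2*p)| ≤ _
    rw [abs_of_nonneg (g_nonneg _)]
    exact g_le p
  exact Summable.of_nonneg_of_le (fun p => abs_nonneg _) hle hs

def Agr (k : ℕ) : Finset ℕ :=
  Finset.range (2 * bs k) ∪ (Finset.Icc (2*bs k) (2*be k + 1)).filter (fun n => n % 2 = 0)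

def Odds (k : ℕ) : Finset ℕ :=
  (Finset.Icc (2*bs k) (2*be k + 1)).filter (fun n => n % 2 = 1)

lemma bs_le_be (k : ℕ) : bs k ≤ be k := by
  have h1 := bs_add_one k; have h2 := be_add_two k
  have : 4^k < 4^(k+1) := Nat.pow_lt_pow_right (by norm_num) (by omega)
  omega

lemma greedy_Agr (k : ℕ) : GreedySet h (Agr k) := by
  intro n hn j hj
  simp only [Agr, Finset.mem_union, Finset.mem_range, Finset.mem_filter, Finset.mem_Icc] at hn hj
  push_neg at hj
  obtain ⟨hj1, hj2⟩ := hj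
  have hj1' : 2 * bs k ≤ j := by omega
  have hupper : |h j| ≤ v (bs k) := by
    rcases le_or_gt j (2 * be k + 1) with hle | hgt
    · have hodd : j % 2 = 1 := by
        have := hj2 ⟨by omega, hle⟩; omega
      rw [abs_h_odd hodd]
      exact v_strictAnti.antitone (by omega)
    · have hq : bs (k+1) ≤ j / 2 := by
        have := bs_succ_eq k; omega
      have hblk : blk (bs k) < blk (j/2) := by
        rw [blk_bs]
        have h1 : blk (bs (k+1)) ≤ blk (j/2) := blk_mono hq
        rw [blk_bs] at h1
        omega
      have := w_lt_v hblk
      have := abs_h_le j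
      linarith
  have hlower : v (bs k) ≤ |h n| := by
    rcases hn with hn | ⟨⟨hn1, hn2⟩, hn3⟩
    · calc v (bs k) ≤ v (n/2) := v_strictAnti.antitone (by omega)
      _ ≤ |h n| := abs_h_ge n
    · rw [abs_h_even hn3]
      have hblk : blk (bs k) = blk (n/2) := by
        rw [blk_bs, blk_eq_of (by omega : bs k ≤ n/2) (by omega : n/2 ≤ be k)]
      exact le_of_lt (v_lt_w_same hblk)
  linarith

lemma greedy_B1 (k : ℕ) : GreedySet h (Finset.range (2 * bs (k+1))) := by
  intro n hn j hj
  rw [Finset.mem_range] at hn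
  rw [Finset.mem_range, not_lt] at hj
  have hbs := bs_succ_eq k
  have hupper : |h j| ≤ v (be k) := by
    have hq : bs (k+1) ≤ j / 2 := by omega
    have hblk : blk (be k) < blk (j/2) := by
      rw [blk_be]
      calc k < k + 1 := by omega
      _ = blk (bs (k+1)) := (blk_bs (k+1)).symm
      _ ≤ blk (j/2) := blk_mono hq
    have := w_lt_v hblk
    have := abs_h_le j
    linarith
  have hlower : v (be k) ≤ |h n| := by
    calc v (be k) ≤ v (n/2) := v_strictAnti.antitone (by omega)
    _ ≤ |h n| := abs_h_ge n
  linarith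

lemma card_block (k : ℕ) : (Finset.Icc (bs k) (be k)).card = 3 * 4^k := by
  rw [Nat.card_Icc]
  have h1 := bs_add_one k; have h2 := be_add_two k
  have h3 : (4:ℕ)^(k+1) = 4 * 4^k := by ring
  omega

lemma sum_v_block (k : ℕ) : (k:ℝ) ≤ ∑ p ∈ Finset.Icc (bs k) (be k), v p ∧
    (1:ℝ) ≤ ∑ p ∈ Finset.Icc (bs k) (be k), v p := by
  have hterm : ∀ p ∈ Finset.Icc (bs k) (be k), (1/2:ℝ)^k ≤ v p := by
    intro p hp
    rw [Finset.mem_Icc] at hp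
    have := v_gt p
    rw [blk_eq_of hp.1 hp.2] at this
    linarith
  have hcard := Finset.card_nsmul_le_sum _ _ _ hterm
  rw [card_block, nsmul_eq_mul] at hcard
  push_cast at hcard
  have he : (4:ℝ)^k * (1/2:ℝ)^k = 2^k := by
    rw [← mul_pow]; norm_num
  have hk2 : (k:ℝ) ≤ 2^k := by
    have : k < 2^k := Nat.lt_two_pow_self
    calc (k:ℝ) ≤ (2^k : ℕ) := by exact_mod_cast this.le
    _ = 2^k := by push_cast; ring
  have h1 : (1:ℝ) ≤ 2^k := one_le_pow₀ (by norm_num)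
  constructor <;> nlinarith [r_pos k]

lemma odds_sdiff (k : ℕ) : Finset.Icc (2*bs k) (2*be k + 1) \ Agr k = Odds k := by
  ext n
  simp only [Agr, Odds, Finset.mem_sdiff, Finset.mem_union, Finset.mem_range,
    Finset.mem_filter, Finset.mem_Icc]
  omega

lemma odds_image (k : ℕ) : Odds k = (Finset.Icc (bs k) (be k)).image (fun p => 2*p+1) := by
  ext n
  simp only [Odds, Finset.mem_filter, Finset.mem_Icc, Finset.mem_image]
  constructor
  · rintro ⟨⟨h1, h2⟩, h3⟩
    exact ⟨n/2, ⟨by omega, by omega⟩, by omega⟩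
  · rintro ⟨p, ⟨h1, h2⟩, rfl⟩
    omega

lemma sum_h_odds (k : ℕ) : ∑ n ∈ Odds k, h n = -∑ p ∈ Finset.Icc (bs k) (be k), v p := by
  rw [odds_image, Finset.sum_image (by intro a _ b _ hab; simp only at hab; omega)]
  rw [← Finset.sum_neg_distrib]
  apply Finset.sum_congr rfl
  intro p _
  show h (2*p+1) = -v p
  unfold h
  rw [if_neg (by omega)]
  have hp : (2*p+1)/2 = p := by omega
  rw [hp]

lemma union_Agr (k : ℕ) : Finset.range (2 * bs (k+1)) = Agr k ∪ Odds k := by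
  have hbs := bs_succ_eq k
  have hle := bs_le_be k
  ext n
  simp only [Agr, Odds, Finset.mem_union, Finset.mem_range, Finset.mem_filter, Finset.mem_Icc]
  omega

lemma disj_Agr (k : ℕ) : Disjoint (Agr k) (Odds k) := by
  rw [Finset.disjoint_left]
  intro n hn hn'
  simp only [Agr, Odds, Finset.mem_union, Finset.mem_range, Finset.mem_filter,
    Finset.mem_Icc] at hn hn'
  omega

lemma oneStar_split (k : ℕ) : oneStar h (Finset.range (2 * bs (k+1)))
    = oneStar h (Agr k) - ∑ p ∈ Finset.Icc (bs k) (be k), v p := by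
  unfold oneStar
  rw [union_Agr k, Finset.sum_union (disj_Agr k), sum_h_odds]
  ring

lemma notMemB_h : ¬ MemB h := by
  intro hmem
  rw [MemB] at hmem
  obtain ⟨m, hm⟩ := ENNReal.exists_nat_gt hmem.ne
  have hge : (m : ℝ≥0∞) ≤ BNorm h := by
    have h1 : ENNReal.ofReal |oneStar h (Finset.Icc (2*bs m) (2*be m + 1) \ Agr m)| ≤ beta h (Agr m) := by
      apply le_trans _ (le_iSup _ (2*bs m))
      exact le_iSup (fun b => ENNReal.ofReal |oneStar h (Finset.Icc (2*bs m) b \ Agr m)|) (2*be m + 1)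
    have h2 : (m:ℝ) ≤ |oneStar h (Finset.Icc (2*bs m) (2*be m + 1) \ Agr m)| := by
      rw [odds_sdiff]
      unfold oneStar
      rw [sum_h_odds, abs_neg, abs_of_nonneg]
      · exact (sum_v_block m).1
      · exact Finset.sum_nonneg fun p _ => (v_pos p).le
    have h3 : beta h (Agr m) ≤ BNorm h := by
      apply le_trans _ (le_iSup _ (Agr m))
      simp only [Set.mem_setOf_eq]
      rw [iSup_pos (greedy_Agr m)]
    calc (m : ℝ≥0∞) = ENNReal.ofReal (m:ℝ) := (ENNReal.ofReal_natCast m).symm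
    _ ≤ ENNReal.ofReal |oneStar h (Finset.Icc (2*bs m) (2*be m + 1) \ Agr m)| :=
        ENNReal.ofReal_le_ofReal h2
    _ ≤ beta h (Agr m) := h1
    _ ≤ BNorm h := h3
  exact absurd (lt_of_le_of_lt hge hm) (lt_irrefl _)

lemma notMemA_h : ¬ MemA h := by
  rintro ⟨-, s, hlim⟩
  obtain ⟨A, hA, hall⟩ := hlim (1/2) (by norm_num)
  set k := A.sup id + 1 with hk
  have hkbs : k ≤ bs k := by
    have : k < 4^k := Nat.lt_pow_self (by norm_num)
    have := bs_add_one k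
    omega
  have hsub : A ⊆ Finset.range (2 * bs k) := by
    intro n hn
    rw [Finset.mem_range]
    have : n ≤ A.sup id := Finset.le_sup (f := id) hn
    omega
  have hsub1 : A ⊆ Agr k := hsub.trans Finset.subset_union_left
  have hsub2 : A ⊆ Finset.range (2 * bs (k+1)) := by
    rw [union_Agr k]
    exact hsub1.trans Finset.subset_union_left
  have e1 := hall (Agr k) (greedy_Agr k) hsub1
  have e2 := hall (Finset.range (2 * bs (k+1))) (greedy_B1 k) hsub2
  rw [abs_lt] at e1 e2
  rw [oneStar_split k] at e2
  have := (sum_v_block k).2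
  linarith

end S15
end

/-- there are `f₁ ∈ 𝔹₀` and `g₁ ∈ ℓ₁` with `f₁ + g₁ ∉ 𝔹` and
`f₁ + g₁ ∉ 𝔸`. -/
theorem stmt_15 :
    ∃ f₁ g₁ : ℕ → ℝ, MemB0 f₁ ∧ (Summable fun n => |g₁ n|) ∧
      ¬ MemB (f₁ + g₁) ∧ ¬ MemA (f₁ + g₁) := by
  refine ⟨S15.f, S15.g, S15.memB0_f, S15.summable_g, ?_, ?_⟩ <;>
  · have hfg : S15.f + S15.g = S15.h := by
      funext n
      show S15.f n + S15.g n = S15.h n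
      unfold S15.f S15.g S15.h
      split <;> ring
    rw [hfg]
    first
    | exact S15.notMemB_h
    | exact S15.notMemA_h
end

section
/- There exist sequences f₂ ∈ 𝔹₀ and g₂ : ℕ → ℝ with ∑_n |g₂(n)| < ∞ such that f₂ + g₂ ∈ 𝔹 but f₂ + g₂ ∉ 𝔸. -/
open Filter ENNReal
open scoped Classical

noncomputable section S16
namespace S16

/-- Left endpoint of block `k`. -/
def L (k : ℕ) : ℕ := 2 ^ (k + 1) - 2

/-- Block index of position `n`. -/
def K (n : ℕ) : ℕ := Nat.log 2 (n + 2) - 1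

lemma L_zero : L 0 = 0 := rfl

lemma two_le_pow (k : ℕ) : 2 ≤ 2 ^ (k + 1) := by
  have h : (2:ℕ) ^ 1 ≤ 2 ^ (k + 1) := Nat.pow_le_pow_right (by norm_num) (by omega)
  simpa using h

lemma L_mono : StrictMono L := by
  intro i j hij
  have h1 : 2 ^ (i + 1) < 2 ^ (j + 1) := Nat.pow_lt_pow_right (by norm_num) (by omega)
  have := two_le_pow i
  simp only [L]; omega

lemma L_mono' : Monotone L := L_mono.monotone

lemma L_succ_sub (k : ℕ) : L (k + 1) - L k = 2 ^ (k + 1) := by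
  have h : (2:ℕ) ^ (k + 2) = 2 * 2 ^ (k + 1) := by ring
  have := two_le_pow k
  simp only [L]; omega

lemma K_spec (n : ℕ) : L (K n) ≤ n ∧ n < L (K n + 1) := by
  have hl1 : 1 ≤ Nat.log 2 (n + 2) := Nat.log_pos (by norm_num) (by omega)
  have hpow : 2 ^ Nat.log 2 (n + 2) ≤ n + 2 := Nat.pow_log_le_self 2 (by omega)
  have hlt : n + 2 < 2 ^ (Nat.log 2 (n + 2) + 1) := Nat.lt_pow_succ_log_self (by norm_num) _
  have hK : K n + 1 = Nat.log 2 (n + 2) := by simp only [K]; omega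
  constructor
  · simp only [L, hK]; omega
  · simp only [L, hK]; omega

lemma K_eq {k n : ℕ} (h1 : L k ≤ n) (h2 : n < L (k + 1)) : K n = k := by
  have hp1 : 2 ^ (k + 1) ≤ n + 2 := by have := two_le_pow k; simp only [L] at h1; omega
  have hp2 : n + 2 < 2 ^ (k + 2) := by
    have e2 : (2:ℕ) ^ (k + 2) = 2 * 2 ^ (k + 1) := by ring
    have := two_le_pow (k + 1); simp only [L] at h2; omega
  have : Nat.log 2 (n + 2) = k + 1 := Nat.log_eq_of_pow_le_of_lt_pow hp1 hp2
  simp only [K, this]; omega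

lemma K_le {n k : ℕ} (h : n < L (k + 1)) : K n ≤ k := by
  by_contra hc
  have : L (k + 1) ≤ L (K n) := L_mono' (by omega)
  have := (K_spec n).1
  omega

lemma le_K {n k : ℕ} (h : L k ≤ n) : k ≤ K n := by
  by_contra hc
  have : L (K n + 1) ≤ L k := L_mono' (by omega)
  have := (K_spec n).2
  omega

lemma K_zero : K 0 = 0 := K_eq (by norm_num [L]) (by norm_num [L])

/-- the magnitude sequence of `f₂`. -/
def a (n : ℕ) : ℝ := (1/2) ^ K n + ((L (K n + 1) - n : ℕ) : ℝ) * (1/8) ^ K n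

/-- the magnitude sequence of `h = f₂ + g₂`. -/
def b (n : ℕ) : ℝ := (1/2) ^ K n + (if Even n then (1/4) ^ K n else 0)

def f₂ (n : ℕ) : ℝ := (-1) ^ n * a n
def h (n : ℕ) : ℝ := (-1) ^ n * b n
def g₂ (n : ℕ) : ℝ := h n - f₂ n

lemma a_pos (n : ℕ) : 0 < a n := by
  have h1 : (0:ℝ) < (1/2) ^ K n := by positivity
  have h2 : (0:ℝ) ≤ ((L (K n + 1) - n : ℕ) : ℝ) * (1/8) ^ K n := by positivity
  simp only [a]; linarith

lemma abs_f₂ (n : ℕ) : |f₂ n| = a n := by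
  simp [f₂, abs_mul, abs_pow, abs_of_pos (a_pos n)]

lemma b_pos (n : ℕ) : 0 < b n := by
  have h1 : (0:ℝ) < (1/2) ^ K n := by positivity
  have h2 : (0:ℝ) ≤ (if Even n then ((1:ℝ)/4) ^ K n else 0) := by positivity
  simp only [b]; linarith

lemma abs_h (n : ℕ) : |h n| = b n := by
  simp [h, abs_mul, abs_pow, abs_of_pos (b_pos n)]

lemma b_lower {n j : ℕ} (hn : n < L (j + 1)) : (1/2:ℝ) ^ j ≤ b n := by
  have hK : K n ≤ j := K_le hn
  have h1 : ((1:ℝ)/2) ^ j ≤ (1/2) ^ K n :=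
    pow_le_pow_of_le_one (by norm_num) (by norm_num) hK
  have h2 : (0:ℝ) ≤ (if Even n then ((1:ℝ)/4) ^ K n else 0) := by positivity
  simp only [b]; linarith

lemma b_upper {m j : ℕ} (hm : L j ≤ m) : b m ≤ 2 * (1/2:ℝ) ^ j := by
  have hK : j ≤ K m := le_K hm
  have h1 : ((1:ℝ)/2) ^ K m ≤ (1/2) ^ j :=
    pow_le_pow_of_le_one (by norm_num) (by norm_num) hK
  have h2 : (if Even m then ((1:ℝ)/4) ^ K m else 0) ≤ (1/2) ^ j := by
    split
    · calc ((1:ℝ)/4) ^ K m ≤ (1/2) ^ K m :=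
            pow_le_pow_left₀ (by norm_num) (by norm_num) _
        _ ≤ (1/2) ^ j := h1
    · positivity
  simp only [b]; linarith

end S16
namespace S16

lemma half_pow_le (n : ℕ) : ((1:ℝ)/2) ^ K n ≤ 4 / ((n:ℝ) + 2) := by
  have h1 : n + 2 ≤ 2 ^ (K n + 2) := by
    have := (K_spec n).2
    have e : (2:ℕ) ^ (K n + 2) = 2 * 2 ^ (K n + 1) := by ring
    have := two_le_pow (K n)
    simp only [L] at *
    omega
  have h2 : ((n:ℝ) + 2) ≤ (2:ℝ) ^ (K n + 2) := by
    calc ((n:ℝ) + 2) = ((n + 2 : ℕ) : ℝ) := by push_cast; ring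
      _ ≤ ((2 ^ (K n + 2) : ℕ) : ℝ) := by exact_mod_cast h1
      _ = (2:ℝ) ^ (K n + 2) := by push_cast; ring
  have h3 : (2:ℝ) ^ (K n + 2) = 4 * 2 ^ K n := by ring
  have h4 : (0:ℝ) < (n:ℝ) + 2 := by positivity
  have h5 : (0:ℝ) < (2:ℝ) ^ K n := by positivity
  rw [div_pow, one_pow, div_le_div_iff₀ h5 h4]
  nlinarith

lemma block_len_le (n : ℕ) : ((L (K n + 1) - n : ℕ) : ℝ) ≤ 2 * 2 ^ K n := by
  have h1 := (K_spec n).1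
  have h2 := L_succ_sub (K n)
  have : (L (K n + 1) - n : ℕ) ≤ 2 ^ (K n + 1) := by omega
  calc ((L (K n + 1) - n : ℕ) : ℝ) ≤ ((2 ^ (K n + 1) : ℕ) : ℝ) := by exact_mod_cast this
    _ = 2 * 2 ^ K n := by push_cast; ring

lemma pow_half_eighth (k : ℕ) : (2:ℝ) ^ k * (1/8) ^ k = (1/4) ^ k := by
  rw [← mul_pow]; norm_num

lemma a_le (n : ℕ) : a n ≤ 3 * ((1:ℝ)/2) ^ K n := by
  have h1 : ((L (K n + 1) - n : ℕ) : ℝ) * (1/8) ^ K n ≤ 2 * (1/4) ^ K n := by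
    have h8 : (0:ℝ) ≤ (1/8) ^ K n := by positivity
    calc ((L (K n + 1) - n : ℕ) : ℝ) * (1/8) ^ K n
        ≤ (2 * 2 ^ K n) * (1/8) ^ K n := by
          exact mul_le_mul_of_nonneg_right (block_len_le n) h8
      _ = 2 * (2 ^ K n * (1/8) ^ K n) := by ring
      _ = 2 * (1/4) ^ K n := by rw [pow_half_eighth]
  have h2 : ((1:ℝ)/4) ^ K n ≤ (1/2) ^ K n :=
    pow_le_pow_left₀ (by norm_num) (by norm_num) _
  simp only [a]; linarith

lemma a_le' (n : ℕ) : a n ≤ 12 / ((n:ℝ) + 2) := by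
  have := a_le n
  have := half_pow_le n
  have h4 : (0:ℝ) < (n:ℝ) + 2 := by positivity
  have : 3 * ((1:ℝ)/2) ^ K n ≤ 3 * (4 / ((n:ℝ) + 2)) := by linarith
  have e : 3 * (4 / ((n:ℝ) + 2)) = 12 / ((n:ℝ) + 2) := by ring
  linarith [a_le n]

lemma a_zero : a 0 = 3 := by
  have hL : L 1 = 2 := rfl
  simp [a, K_zero, hL]
  norm_num

lemma a_succ_lt (n : ℕ) : a (n + 1) < a n := by
  have hs := K_spec n
  have hs' := K_spec (n + 1)
  by_cases hc : n + 1 < L (K n + 1)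
  · -- same block
    have hK : K (n + 1) = K n := K_eq (le_trans hs.1 (by omega)) hc
    have hm : (L (K n + 1) - n : ℕ) = (L (K n + 1) - (n + 1) : ℕ) + 1 := by omega
    have h8 : (0:ℝ) < (1/8) ^ K n := by positivity
    simp only [a, hK, hm]
    push_cast
    nlinarith
  · -- boundary: n + 1 = L (K n + 1)
    set k := K n with hk
    have hb : n + 1 = L (k + 1) := by omega
    have hkk : L (k + 1) < L (k + 1 + 1) := L_mono (by omega)
    have hK1 : K (n + 1) = k + 1 := K_eq (by omega) (by omega)
    have hm1 : (L (k + 1) - n : ℕ) = 1 := by omega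
    have hm2 : (L (k + 1 + 1) - (n + 1) : ℕ) = 2 ^ (k + 1 + 1) := by
      have := L_succ_sub (k + 1); omega
    simp only [a, hK1, ← hk, hm1, hm2]
    push_cast
    have e1 : ((2:ℝ) ^ (k + 1 + 1)) * (1/8) ^ (k + 1) = 2 * (1/4) ^ (k + 1) := by
      have h2 : ((2:ℝ) ^ (k + 1 + 1)) = 2 * 2 ^ (k + 1) := by ring
      rw [h2, mul_assoc, ← mul_pow]; norm_num
    have e3 : 2 * ((1:ℝ)/4) ^ (k + 1) ≤ (1/2) ^ (k + 1) := by
      have hp := pow_le_pow_left₀ (show (0:ℝ) ≤ 1/4 by norm_num)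
        (show (1:ℝ)/4 ≤ 1/2 by norm_num) k
      calc 2 * ((1:ℝ)/4) ^ (k + 1) = (1/2) * (1/4) ^ k := by ring
        _ ≤ (1/2) * (1/2) ^ k := by linarith
        _ = (1/2) ^ (k + 1) := by ring
    have e4 : ((1:ℝ)/2) ^ k = 2 * (1/2) ^ (k + 1) := by ring
    have e5 : (0:ℝ) < (1/8) ^ k := by positivity
    linarith

end S16
namespace S16

lemma a_strictAnti : StrictAnti a := strictAnti_nat_of_succ_lt a_succ_lt

lemma a_anti : Antitone a := a_strictAnti.antitone

/-- Alternating series bound, two-sided version. -/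
lemma alt_aux (u : ℕ → ℝ) (h0 : ∀ n, 0 ≤ u n) (h1 : ∀ n, u (n + 1) ≤ u n) :
    ∀ c s, 0 ≤ (-1:ℝ) ^ s * (∑ n ∈ Finset.Icc s (s + c), (-1:ℝ) ^ n * u n) ∧
      (-1:ℝ) ^ s * (∑ n ∈ Finset.Icc s (s + c), (-1:ℝ) ^ n * u n) ≤ u s := by
  intro c
  induction c with
  | zero =>
    intro s
    have e : (-1:ℝ) ^ s * ((-1:ℝ) ^ s * u s) = u s := by
      rw [← mul_assoc, ← mul_pow]; norm_num
    simp only [Nat.add_zero, Finset.Icc_self, Finset.sum_singleton, e]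
    exact ⟨h0 s, le_refl _⟩
  | succ c ih =>
    intro s
    have hins : Finset.Icc s (s + (c + 1)) = insert s (Finset.Icc (s + 1) (s + 1 + c)) := by
      ext x; simp only [Finset.mem_Icc, Finset.mem_insert]; omega
    have hnot : s ∉ Finset.Icc (s + 1) (s + 1 + c) := by simp
    rw [hins, Finset.sum_insert hnot]
    have e : (-1:ℝ) ^ s * ((-1:ℝ) ^ s * u s
        + ∑ n ∈ Finset.Icc (s + 1) (s + 1 + c), (-1:ℝ) ^ n * u n)
        = u s - (-1:ℝ) ^ (s + 1) * (∑ n ∈ Finset.Icc (s + 1) (s + 1 + c), (-1:ℝ) ^ n * u n) := by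
      have e2 : (-1:ℝ) ^ s * (-1:ℝ) ^ s = 1 := by rw [← mul_pow]; norm_num
      rw [mul_add, ← mul_assoc, e2, one_mul, pow_succ]; ring
    rw [e]
    have := ih (s + 1)
    constructor
    · linarith [h1 s]
    · linarith [h0 (s + 1)]

lemma alt_bound (u : ℕ → ℝ) (h0 : ∀ n, 0 ≤ u n) (h1 : ∀ n, u (n + 1) ≤ u n) (s t : ℕ) :
    |∑ n ∈ Finset.Icc s t, (-1:ℝ) ^ n * u n| ≤ u s := by
  rcases le_or_gt s t with hst | hst
  · obtain ⟨c, rfl⟩ : ∃ c, t = s + c := ⟨t - s, by omega⟩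
    obtain ⟨hl, hu⟩ := alt_aux u h0 h1 c s
    have e : |∑ n ∈ Finset.Icc s (s + c), (-1:ℝ) ^ n * u n|
        = |(-1:ℝ) ^ s * (∑ n ∈ Finset.Icc s (s + c), (-1:ℝ) ^ n * u n)| := by
      rw [abs_mul, abs_pow, abs_neg, abs_one, one_pow, one_mul]
    rw [e, abs_of_nonneg hl]
    exact hu
  · rw [Finset.Icc_eq_empty (by omega), Finset.sum_empty, abs_zero]
    exact h0 s

lemma sum_f₂_Icc (p q : ℕ) : |∑ n ∈ Finset.Icc p q, f₂ n| ≤ a p :=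
  alt_bound a (fun n => (a_pos n).le) (fun n => (a_succ_lt n).le) p q

lemma quarter_pow_le (n : ℕ) : ((1:ℝ)/4) ^ K n ≤ 16 / (((n:ℝ) + 1) * ((n:ℝ) + 2)) := by
  have h1 := half_pow_le n
  have h2 : (0:ℝ) ≤ (1/2) ^ K n := by positivity
  have e : ((1:ℝ)/4) ^ K n = ((1/2) ^ K n) ^ 2 := by
    rw [← pow_mul, mul_comm, pow_mul]; norm_num
  have h3 : (((1:ℝ)/2) ^ K n) ^ 2 ≤ (4 / ((n:ℝ) + 2)) ^ 2 := by
    apply pow_le_pow_left₀ h2 h1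
  have h4 : (0:ℝ) < (n:ℝ) + 1 := by positivity
  have h5 : (0:ℝ) < (n:ℝ) + 2 := by positivity
  have h6 : ((4:ℝ) / ((n:ℝ) + 2)) ^ 2 = 16 / (((n:ℝ) + 2) * ((n:ℝ) + 2)) := by
    rw [div_pow]; norm_num; ring_nf
  have h7 : (16:ℝ) / (((n:ℝ) + 2) * ((n:ℝ) + 2)) ≤ 16 / (((n:ℝ) + 1) * ((n:ℝ) + 2)) := by
    apply div_le_div_of_nonneg_left (by norm_num) (by positivity)
    nlinarith
  rw [e]; linarith

lemma abs_g₂ (n : ℕ) : |g₂ n| ≤ 48 / (((n:ℝ) + 1) * ((n:ℝ) + 2)) := by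
  have e : g₂ n = (-1) ^ n * (b n - a n) := by simp only [g₂, h, f₂]; ring
  have e2 : |g₂ n| = |b n - a n| := by
    rw [e, abs_mul, abs_pow, abs_neg, abs_one, one_pow, one_mul]
  have hd : |b n - a n| ≤ 3 * ((1:ℝ)/4) ^ K n := by
    have hδ : (0:ℝ) ≤ (if Even n then ((1:ℝ)/4) ^ K n else 0) := by positivity
    have hδ' : (if Even n then ((1:ℝ)/4) ^ K n else 0) ≤ (1/4) ^ K n := by
      split
      · exact le_refl _
      · positivity
    have hη1 : (0:ℝ) ≤ ((L (K n + 1) - n : ℕ) : ℝ) * (1/8) ^ K n := by positivity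
    have hη2 : ((L (K n + 1) - n : ℕ) : ℝ) * (1/8) ^ K n ≤ 2 * (1/4) ^ K n := by
      have h8 : (0:ℝ) ≤ (1/8) ^ K n := by positivity
      calc ((L (K n + 1) - n : ℕ) : ℝ) * (1/8) ^ K n
          ≤ (2 * 2 ^ K n) * (1/8) ^ K n := mul_le_mul_of_nonneg_right (block_len_le n) h8
        _ = 2 * (2 ^ K n * (1/8) ^ K n) := by ring
        _ = 2 * (1/4) ^ K n := by rw [pow_half_eighth]
    have : b n - a n = (if Even n then ((1:ℝ)/4) ^ K n else 0)
        - ((L (K n + 1) - n : ℕ) : ℝ) * (1/8) ^ K n := by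
      simp only [b, a]; ring
    rw [this, abs_sub_le_iff]
    constructor <;> linarith
  have hq := quarter_pow_le n
  have h16 : 3 * ((16:ℝ) / (((n:ℝ) + 1) * ((n:ℝ) + 2))) = 48 / (((n:ℝ) + 1) * ((n:ℝ) + 2)) := by
    ring
  rw [e2]; linarith

lemma sum_g₂_bound (S : Finset ℕ) : ∑ n ∈ S, |g₂ n| ≤ 48 := by
  set M := S.sup id + 1 with hM
  have hsub : S ⊆ Finset.range M := by
    intro x hx
    simp only [Finset.mem_range, hM]
    exact Nat.lt_succ_of_le (Finset.le_sup (f := id) hx)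
  have h1 : ∑ n ∈ S, |g₂ n| ≤ ∑ n ∈ Finset.range M, |g₂ n| :=
    Finset.sum_le_sum_of_subset_of_nonneg hsub (fun n _ _ => abs_nonneg _)
  have h2 : ∑ n ∈ Finset.range M, |g₂ n|
      ≤ ∑ n ∈ Finset.range M, (48 / ((n:ℝ) + 1) - 48 / ((n:ℝ) + 2)) := by
    apply Finset.sum_le_sum
    intro n _
    have h4 : (0:ℝ) < (n:ℝ) + 1 := by positivity
    have h5 : (0:ℝ) < (n:ℝ) + 2 := by positivity
    have e : 48 / ((n:ℝ) + 1) - 48 / ((n:ℝ) + 2) = 48 / (((n:ℝ) + 1) * ((n:ℝ) + 2)) := by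
      field_simp; ring
    rw [e]; exact abs_g₂ n
  have h3 : ∑ n ∈ Finset.range M, ((48:ℝ) / ((n:ℝ) + 1) - 48 / ((n:ℝ) + 2))
      = 48 - 48 / ((M:ℝ) + 1) := by
    have := Finset.sum_range_sub' (f := fun i : ℕ => (48:ℝ) / ((i:ℝ) + 1)) M
    rw [show (∑ n ∈ Finset.range M, ((48:ℝ) / ((n:ℝ) + 1) - 48 / ((n:ℝ) + 2)))
      = ∑ i ∈ Finset.range M, ((48:ℝ) / ((i:ℝ) + 1) - 48 / (((i+1:ℕ):ℝ) + 1)) from by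
        apply Finset.sum_congr rfl; intro i _; push_cast; ring, this]
    norm_num
  have h6 : (0:ℝ) ≤ 48 / ((M:ℝ) + 1) := by positivity
  linarith

lemma summable_g₂ : Summable (fun n => |g₂ n|) :=
  summable_of_sum_range_le (fun n => abs_nonneg _) (fun n => sum_g₂_bound _)

lemma h_eq (n : ℕ) : h n = f₂ n + g₂ n := by simp [g₂]

lemma sum_h_Icc (p q : ℕ) : |∑ n ∈ Finset.Icc p q, h n| ≤ 51 := by
  have e : ∑ n ∈ Finset.Icc p q, h n
      = (∑ n ∈ Finset.Icc p q, f₂ n) + ∑ n ∈ Finset.Icc p q, g₂ n := by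
    rw [← Finset.sum_add_distrib]; exact Finset.sum_congr rfl fun n _ => h_eq n
  have h1 := sum_f₂_Icc p q
  have h2 : |∑ n ∈ Finset.Icc p q, g₂ n| ≤ 48 :=
    le_trans (Finset.abs_sum_le_sum_abs _ _) (sum_g₂_bound _)
  have h3 : a p ≤ 3 := by rw [← a_zero]; exact a_anti (Nat.zero_le p)
  rw [e]
  calc |(∑ n ∈ Finset.Icc p q, f₂ n) + ∑ n ∈ Finset.Icc p q, g₂ n|
      ≤ |∑ n ∈ Finset.Icc p q, f₂ n| + |∑ n ∈ Finset.Icc p q, g₂ n| := abs_add_le _ _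
    _ ≤ 51 := by linarith

lemma sum_abs_h_block (k : ℕ) : ∑ n ∈ Finset.Ico (L k) (L (k + 1)), |h n| ≤ 4 := by
  have hcard : (Finset.Ico (L k) (L (k + 1))).card = 2 ^ (k + 1) := by
    rw [Nat.card_Ico]; exact L_succ_sub k
  have hb : ∀ n ∈ Finset.Ico (L k) (L (k + 1)), |h n| ≤ 2 * ((1:ℝ)/2) ^ k := by
    intro n hn
    rw [Finset.mem_Ico] at hn
    rw [abs_h]
    exact b_upper hn.1
  calc ∑ n ∈ Finset.Ico (L k) (L (k + 1)), |h n|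
      ≤ (Finset.Ico (L k) (L (k + 1))).card • (2 * ((1:ℝ)/2) ^ k) :=
        Finset.sum_le_card_nsmul _ _ _ hb
    _ = ((2:ℝ) ^ (k + 1)) * (2 * (1/2) ^ k) := by
        rw [hcard, nsmul_eq_mul]; push_cast; ring
    _ = 4 * ((2:ℝ) * (1/2)) ^ k := by rw [mul_pow]; ring
    _ = 4 := by norm_num

end S16
namespace S16

lemma greedy_f₂_range {B : Finset ℕ} (hB : GreedySet f₂ B) (hne : B.Nonempty) :
    B = Finset.range (B.max' hne + 1) := by
  ext n
  simp only [Finset.mem_range, Nat.lt_succ_iff]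
  constructor
  · exact fun hn => B.le_max' n hn
  · intro hn
    by_contra hc
    have hmax := B.max'_mem hne
    have hle := hB _ hmax n hc
    rw [abs_f₂, abs_f₂] at hle
    have hlt : n < B.max' hne := lt_of_le_of_ne hn (fun he => hc (he ▸ hmax))
    have := a_strictAnti hlt
    linarith

lemma memc0_f₂ : Memc0 f₂ := by
  unfold Memc0
  have hg : Tendsto (fun n : ℕ => 12 / ((n:ℝ) + 2)) atTop (nhds 0) := by
    apply Tendsto.div_atTop (tendsto_const_nhds)
    exact tendsto_atTop_add_const_right _ 2 tendsto_natCast_atTop_atTop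
  exact squeeze_zero_norm (fun n => by rw [Real.norm_eq_abs, abs_f₂]; exact a_le' n) hg

lemma memB0_f₂ : MemB0 f₂ := by
  refine ⟨memc0_f₂, ?_⟩
  intro ε hε
  obtain ⟨m, hm⟩ : ∃ m : ℕ, a m < ε := by
    refine ⟨⌈(12:ℝ)/ε⌉₊, ?_⟩
    have h1 : (12:ℝ)/ε ≤ (⌈(12:ℝ)/ε⌉₊ : ℝ) := Nat.le_ceil _
    set m := ⌈(12:ℝ)/ε⌉₊
    have h2 : (12:ℝ) ≤ ε * m := by
      calc (12:ℝ) = ε * (12/ε) := by field_simp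
        _ ≤ ε * m := mul_le_mul_of_nonneg_left h1 hε.le
    have h3 : a m ≤ 12 / ((m:ℝ) + 2) := a_le' m
    have h4 : (0:ℝ) < (m:ℝ) + 2 := by positivity
    have h5 : 12 / ((m:ℝ) + 2) < ε := by rw [div_lt_iff₀ h4]; nlinarith
    linarith
  refine ⟨Finset.range (m + 1), ?_, ?_⟩
  · intro n hn j hj
    simp only [Finset.mem_range] at hn hj
    rw [abs_f₂, abs_f₂]
    exact a_anti (by omega)
  · intro B hB hAB
    have hne : B.Nonempty := ⟨0, hAB (by simp)⟩
    have hBr := greedy_f₂_range hB hne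
    set M := B.max' hne + 1 with hMdef
    have hmM : m + 1 ≤ M := by
      have h1 : m ∈ B := hAB (by simp)
      have := B.le_max' m h1
      omega
    have key : ∀ p q : ℕ, |oneStar f₂ (Finset.Icc p q \ B)| ≤ a m := by
      intro p q
      have hset : Finset.Icc p q \ B = Finset.Icc (max p M) q := by
        rw [hBr]; ext x
        simp only [Finset.mem_sdiff, Finset.mem_Icc, Finset.mem_range]
        omega
      rw [hset]
      calc |∑ n ∈ Finset.Icc (max p M) q, f₂ n| ≤ a (max p M) := sum_f₂_Icc _ _
        _ ≤ a m := a_anti (by omega)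
    unfold beta
    calc (⨆ p : ℕ, ⨆ q : ℕ, ENNReal.ofReal |oneStar f₂ (Finset.Icc p q \ B)|)
        ≤ ENNReal.ofReal (a m) := by
          apply iSup_le; intro p; apply iSup_le; intro q
          exact ENNReal.ofReal_le_ofReal (key p q)
      _ < ENNReal.ofReal ε := (ENNReal.ofReal_lt_ofReal_iff hε).2 hm

lemma b_upper_strict {m j : ℕ} (hj : 1 ≤ j) (hm : L j ≤ m) : b m < 2 * ((1:ℝ)/2) ^ j := by
  have hK : j ≤ K m := le_K hm
  have h1 : ((1:ℝ)/2) ^ K m ≤ (1/2) ^ j :=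
    pow_le_pow_of_le_one (by norm_num) (by norm_num) hK
  have h2 : (if Even m then ((1:ℝ)/4) ^ K m else 0) ≤ (1/4) ^ j := by
    split
    · exact pow_le_pow_of_le_one (by norm_num) (by norm_num) hK
    · positivity
  have h3 : ((1:ℝ)/4) ^ j < (1/2) ^ j := by
    apply pow_lt_pow_left₀ (by norm_num) (by norm_num) (by omega)
  simp only [b]; linarith

lemma greedy_h_struct {A : Finset ℕ} (hA : GreedySet h A) (hne : A.Nonempty) :
    ∃ k : ℕ, (∀ n < L k, n ∈ A) ∧ (∀ n ∈ A, n < L (k + 1)) := by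
  set M := A.max' hne with hMdef
  refine ⟨K M, ?_, ?_⟩
  · intro n hn
    by_contra hc
    have hk1 : 1 ≤ K M := by
      by_contra hk0
      have h0 : K M = 0 := by omega
      rw [h0, L_zero] at hn; omega
    obtain ⟨k', hk'⟩ : ∃ k', K M = k' + 1 := ⟨K M - 1, by omega⟩
    have hgd := hA M (A.max'_mem hne) n hc
    rw [abs_h, abs_h] at hgd
    have h1 : ((1:ℝ)/2) ^ k' ≤ b n := b_lower (by rw [hk'] at hn; exact hn)
    have h2 : b M < 2 * ((1:ℝ)/2) ^ (k' + 1) := by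
      apply b_upper_strict (by omega)
      rw [← hk']; exact (K_spec M).1
    have h3 : 2 * ((1:ℝ)/2) ^ (k' + 1) = (1/2) ^ k' := by ring
    linarith
  · intro n hnA
    have h1 : n ≤ M := A.le_max' n hnA
    have := (K_spec M).2
    omega

lemma memB_h : MemB h := by
  have key : ∀ A : Finset ℕ, GreedySet h A → ∀ p q : ℕ,
      |oneStar h (Finset.Icc p q \ A)| ≤ 55 := by
    intro A hA p q
    rcases A.eq_empty_or_nonempty with rfl | hne
    · simp only [Finset.sdiff_empty]
      have := sum_h_Icc p q
      unfold oneStar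
      linarith
    · obtain ⟨k, hk1, hk2⟩ := greedy_h_struct hA hne
      set S₁ := (Finset.Icc p q \ A) ∩ Finset.Ico (L k) (L (k + 1)) with hS₁
      set S₂ := Finset.Icc (max p (L (k + 1))) q with hS₂
      have hsplit : Finset.Icc p q \ A = S₁ ∪ S₂ := by
        ext n
        simp only [hS₁, hS₂, Finset.mem_union, Finset.mem_sdiff, Finset.mem_Icc,
          Finset.mem_inter, Finset.mem_Ico]
        constructor
        · rintro ⟨⟨hp, hq⟩, hnA⟩
          by_cases hL : n < L (k + 1)
          · left
            refine ⟨⟨⟨hp, hq⟩, hnA⟩, ?_, hL⟩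
            by_contra hc
            exact hnA (hk1 n (by omega))
          · right; omega
        · rintro (⟨⟨hIcc, hnA⟩, _⟩ | ⟨hge, hq⟩)
          · exact ⟨hIcc, hnA⟩
          · refine ⟨⟨by omega, hq⟩, fun hn => ?_⟩
            have := hk2 n hn
            omega
      have hdisj : Disjoint S₁ S₂ := by
        rw [Finset.disjoint_left]
        intro n hn1 hn2
        simp only [hS₁, Finset.mem_inter, Finset.mem_Ico] at hn1
        simp only [hS₂, Finset.mem_Icc] at hn2
        omega
      have h1 : |∑ n ∈ S₁, h n| ≤ 4 := by
        calc |∑ n ∈ S₁, h n| ≤ ∑ n ∈ S₁, |h n| := Finset.abs_sum_le_sum_abs _ _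
          _ ≤ ∑ n ∈ Finset.Ico (L k) (L (k + 1)), |h n| :=
              Finset.sum_le_sum_of_subset_of_nonneg
                (by rw [hS₁]; exact Finset.inter_subset_right)
                (fun _ _ _ => abs_nonneg _)
          _ ≤ 4 := sum_abs_h_block k
      have h2 : |∑ n ∈ S₂, h n| ≤ 51 := sum_h_Icc _ _
      unfold oneStar
      rw [hsplit, Finset.sum_union hdisj]
      calc |(∑ n ∈ S₁, h n) + ∑ n ∈ S₂, h n|
          ≤ |∑ n ∈ S₁, h n| + |∑ n ∈ S₂, h n| := abs_add_le _ _
        _ ≤ 55 := by linarith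
  unfold MemB BNorm
  have hle : (⨆ A ∈ {A : Finset ℕ | GreedySet h A}, beta h A) ≤ ENNReal.ofReal 55 := by
    apply iSup₂_le
    intro A hA
    unfold beta
    apply iSup_le; intro p; apply iSup_le; intro q
    exact ENNReal.ofReal_le_ofReal (key A hA p q)
  exact lt_of_le_of_lt hle ENNReal.ofReal_lt_top

end S16
namespace S16

lemma L_even (m : ℕ) : ∃ r, L m = 2 * r := by
  have h1 : 0 < 2 ^ m := by positivity
  have h2 : (2:ℕ) ^ (m + 1) = 2 * 2 ^ m := by ring
  exact ⟨2 ^ m - 1, by simp only [L]; omega⟩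

/-- The set of "plus" positions in block `k + 1`. -/
def E (k : ℕ) : Finset ℕ := (Finset.range (2 ^ (k + 1))).image (fun i => L (k + 1) + 2 * i)

lemma mem_E {k n : ℕ} : n ∈ E k ↔ L (k + 1) ≤ n ∧ n < L (k + 1 + 1) ∧ Even n := by
  obtain ⟨r1, hr1⟩ := L_even (k + 1)
  have hdiff := L_succ_sub (k + 1)
  have hmono : L (k + 1) ≤ L (k + 1 + 1) := L_mono' (by omega)
  have hp : (2:ℕ) ^ (k + 1 + 1) = 2 * 2 ^ (k + 1) := by ring
  simp only [E, Finset.mem_image, Finset.mem_range]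
  constructor
  · rintro ⟨i, hi, rfl⟩
    exact ⟨by omega, by omega, ⟨r1 + i, by omega⟩⟩
  · rintro ⟨hge, hlt, r, hr⟩
    exact ⟨r - r1, by omega, by omega⟩

lemma greedy_B₁ (k : ℕ) : GreedySet h (Finset.range (L (k + 1))) := by
  intro n hn m hm
  simp only [Finset.mem_range] at hn hm
  rw [abs_h, abs_h]
  have h1 : ((1:ℝ)/2) ^ k ≤ b n := b_lower hn
  have h2 : b m ≤ 2 * ((1:ℝ)/2) ^ (k + 1) := b_upper (by omega)
  have h3 : 2 * ((1:ℝ)/2) ^ (k + 1) = (1/2) ^ k := by ring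
  linarith

lemma greedy_B₂ (k : ℕ) : GreedySet h (Finset.range (L (k + 1)) ∪ E k) := by
  intro n hn m hm
  simp only [Finset.mem_union, Finset.mem_range] at hn hm
  push_neg at hm
  obtain ⟨hm1, hm2⟩ := hm
  rw [abs_h, abs_h]
  have hnL : n < L (k + 1 + 1) := by
    rcases hn with hn | hn
    · have := L_mono' (show k + 1 ≤ k + 1 + 1 by omega); omega
    · exact (mem_E.1 hn).2.1
  have h1 : ((1:ℝ)/2) ^ (k + 1) ≤ b n := b_lower hnL
  have hmge : L (k + 1) ≤ m := by omega
  by_cases hmL : m < L (k + 1 + 1)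
  · have hodd : ¬ Even m := fun he => hm2 (mem_E.2 ⟨hmge, hmL, he⟩)
    have hKm : K m = k + 1 := K_eq hmge hmL
    have h4 : b m = ((1:ℝ)/2) ^ (k + 1) := by simp [b, hKm, hodd]
    linarith
  · have h2 : b m ≤ 2 * ((1:ℝ)/2) ^ (k + 1 + 1) := b_upper (by omega)
    have h3 : 2 * ((1:ℝ)/2) ^ (k + 1 + 1) = (1/2) ^ (k + 1) := by ring
    linarith

lemma sum_E_ge (k : ℕ) : 1 ≤ ∑ n ∈ E k, h n := by
  obtain ⟨r1, hr1⟩ := L_even (k + 1)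
  have hdiff := L_succ_sub (k + 1)
  have hmono : L (k + 1) ≤ L (k + 1 + 1) := L_mono' (by omega)
  have hp : (2:ℕ) ^ (k + 1 + 1) = 2 * 2 ^ (k + 1) := by ring
  have hinj : ∀ x ∈ Finset.range (2 ^ (k + 1)), ∀ y ∈ Finset.range (2 ^ (k + 1)),
      L (k + 1) + 2 * x = L (k + 1) + 2 * y → x = y := by
    intro x _ y _ hxy; omega
  have e : ∑ n ∈ E k, h n = ∑ i ∈ Finset.range (2 ^ (k + 1)), h (L (k + 1) + 2 * i) := by
    rw [E, Finset.sum_image hinj]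
  have hval : ∀ i ∈ Finset.range (2 ^ (k + 1)),
      h (L (k + 1) + 2 * i) = ((1:ℝ)/2) ^ (k + 1) + (1/4) ^ (k + 1) := by
    intro i hi
    simp only [Finset.mem_range] at hi
    have heven : Even (L (k + 1) + 2 * i) := ⟨r1 + i, by omega⟩
    have hK : K (L (k + 1) + 2 * i) = k + 1 := K_eq (by omega) (by omega)
    have hneg : (-1:ℝ) ^ (L (k + 1) + 2 * i) = 1 := heven.neg_one_pow
    simp [h, b, hK, heven, hneg]
  rw [e, Finset.sum_congr rfl hval, Finset.sum_const, Finset.card_range, nsmul_eq_mul]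
  push_cast
  rw [mul_add]
  have h1 : ((2:ℝ)) ^ (k + 1) * ((1/2) ^ (k + 1)) = 1 := by rw [← mul_pow]; norm_num
  have h2 : (0:ℝ) ≤ (2:ℝ) ^ (k + 1) * (1/4) ^ (k + 1) := by positivity
  linarith

lemma not_memA : ¬ MemA h := by
  rintro ⟨-, s, hs⟩
  obtain ⟨A, hA, hconv⟩ := hs (1/2) (by norm_num)
  set k := A.sup id with hk
  have hAsub : A ⊆ Finset.range (L (k + 1)) := by
    intro x hx
    simp only [Finset.mem_range]
    have h1 : x ≤ k := Finset.le_sup (f := id) hx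
    have h2 : k + 1 + 1 < 2 ^ (k + 1 + 1) := Nat.lt_two_pow_self
    simp only [L]; omega
  have hB₁ : GreedySet h (Finset.range (L (k + 1))) := greedy_B₁ k
  have hB₂ : GreedySet h (Finset.range (L (k + 1)) ∪ E k) := greedy_B₂ k
  have hd : Disjoint (Finset.range (L (k + 1))) (E k) := by
    rw [Finset.disjoint_left]
    intro x hx hxE
    simp only [Finset.mem_range] at hx
    have := (mem_E.1 hxE).1
    omega
  have hsum : oneStar h (Finset.range (L (k + 1)) ∪ E k)
      = oneStar h (Finset.range (L (k + 1))) + ∑ n ∈ E k, h n := by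
    unfold oneStar; rw [Finset.sum_union hd]
  have c1 := hconv _ hB₁ hAsub
  have c2 := hconv _ hB₂ (hAsub.trans Finset.subset_union_left)
  have hge := sum_E_ge k
  rw [hsum] at c2
  rw [abs_lt] at c1 c2
  obtain ⟨c1l, c1r⟩ := c1
  obtain ⟨c2l, c2r⟩ := c2
  linarith

lemma fg_eq : f₂ + g₂ = h := by
  funext n
  simp only [Pi.add_apply, g₂]
  ring

end S16

/-- there are `f₂ ∈ 𝔹₀` and `g₂ ∈ ℓ₁` with `f₂ + g₂ ∈ 𝔹` but
`f₂ + g₂ ∉ 𝔸`. -/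
theorem stmt_16 :
    ∃ f₂ g₂ : ℕ → ℝ, MemB0 f₂ ∧ (Summable fun n => |g₂ n|) ∧
      MemB (f₂ + g₂) ∧ ¬ MemA (f₂ + g₂) := by
  refine ⟨S16.f₂, S16.g₂, S16.memB0_f₂, S16.summable_g₂, ?_, ?_⟩
  · rw [S16.fg_eq]; exact S16.memB_h
  · rw [S16.fg_eq]; exact S16.not_memA
end S16
end
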